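/- arXiv:1510.03045 — 13 statements merged into one kernel-verified Lean document; each statement's English description precedes it below -/
import Mathlib

section
/- For every word length n ≥ 1 and alphabet size d ≥ 2, the majority strategy g_maj is an optimal deterministic strategy: for every strategy f : Fin d → Fin n → Fin d, Value(f) ≤ Value(g_maj). -/
open Finset

/-- Similarity: number of positions where two strings agree. -/
def Sim (n d : ℕ) (z x : Fin n → Fin d) : ℕ :=
  (Finset.univ.filter fun j => z j = x j).card

/-- Best approximation of a word `x` by the rows of strategy `g`. -/
def maxSim (n d : ℕ) (g : Fin d → Fin n → Fin d) (x : Fin n → Fin d) : ℕ :=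
  Finset.univ.sup fun y => Sim n d (g y) x

/-- Value (average success probability) of a strategy, assuming Alice's
optimal encoding. -/
def Value (n d : ℕ) (g : Fin d → Fin n → Fin d) : ℚ :=
  (∑ x : Fin n → Fin d, (maxSim n d g x : ℚ)) / (n * d ^ n)

/-- A strategy is optimal if no strategy has a larger value. -/
def IsOptimal (n d : ℕ) (g : Fin d → Fin n → Fin d) : Prop :=
  ∀ f : Fin d → Fin n → Fin d, Value n d f ≤ Value n d g

/-- Property 1: every column of the decoding matrix is injective. -/
def Property1 (n d : ℕ) (g : Fin d → Fin n → Fin d) : Prop :=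
  ∀ j : Fin n, Function.Injective fun y => g y j

/-- Property 2: at most one column of the decoding matrix fails to be injective. -/
def Property2 (n d : ℕ) (g : Fin d → Fin n → Fin d) : Prop :=
  ∀ j₁ j₂ : Fin n, ¬ Function.Injective (fun y => g y j₁) →
    ¬ Function.Injective (fun y => g y j₂) → j₁ = j₂


lemma core {d : ℕ} (c : Fin d → Fin d) (R : Fin d → ℕ) :
    ∑ a : Fin d, univ.sup (fun y => (if c y = a then 1 else 0) + R y)
      ≤ ∑ a : Fin d, univ.sup (fun y => (if y = a then 1 else 0) + R y) := by
  set M := univ.sup R with hM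
  have hRM : ∀ y : Fin d, R y ≤ M := fun y => Finset.le_sup (mem_univ y)
  calc ∑ a : Fin d, univ.sup (fun y => (if c y = a then 1 else 0) + R y)
      ≤ ∑ a : Fin d, (M + ∑ y ∈ univ.filter (fun y => c y = a), (1 + R y - M)) := by
        refine Finset.sum_le_sum fun a _ => ?_
        refine Finset.sup_le fun y _ => ?_
        by_cases h : c y = a
        · have h1 : (1 + R y - M) ≤ ∑ z ∈ univ.filter (fun z => c z = a), (1 + R z - M) :=
            Finset.single_le_sum (f := fun z => 1 + R z - M) (fun z _ => Nat.zero_le _)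
              (by simp only [Finset.mem_filter, Finset.mem_univ, true_and]; exact h)
          have h2 := hRM y
          rw [if_pos h]
          omega
        · rw [if_neg h, Nat.zero_add]
          exact le_trans (hRM y) (Nat.le_add_right _ _)
    _ = ∑ _a : Fin d, M + ∑ y : Fin d, (1 + R y - M) := by
        rw [Finset.sum_add_distrib]
        congr 1
        exact Finset.sum_fiberwise univ (fun y => c y) (fun y => 1 + R y - M)
    _ = ∑ a : Fin d, (M + (1 + R a - M)) := by rw [Finset.sum_add_distrib]
    _ ≤ ∑ a : Fin d, univ.sup (fun y => (if y = a then 1 else 0) + R y) := by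
        refine Finset.sum_le_sum fun a _ => ?_
        have h1 : M ≤ univ.sup (fun y => (if y = a then 1 else 0) + R y) := by
          refine Finset.sup_le fun y _ => ?_
          exact le_trans (Nat.le_add_left _ _)
            (Finset.le_sup (f := fun y => (if y = a then 1 else 0) + R y) (mem_univ y))
        have h2 : 1 + R a ≤ univ.sup (fun y => (if y = a then 1 else 0) + R y) := by
          have := Finset.le_sup (f := fun y => (if y = a then 1 else 0) + R y) (mem_univ a)
          simpa using this
        omega


lemma sim_split (n d : ℕ) (j0 : Fin n) (z x : Fin n → Fin d) :
    Sim n d z x = (if z j0 = x j0 then 1 else 0)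
      + ∑ j : {j : Fin n // j ≠ j0}, (if z j.1 = x j.1 then 1 else 0) := by
  unfold Sim
  rw [Finset.card_filter]
  rw [← Finset.add_sum_erase _ _ (mem_univ j0)]
  congr 1
  rw [← Finset.sum_subtype (univ.erase j0) (fun j => by simp [Finset.mem_erase])
    (fun j => if z j = x j then 1 else 0)]

lemma reindex (n d : ℕ) (h : Fin d → Fin n → Fin d) (j0 : Fin n) :
    ∑ x : Fin n → Fin d, maxSim n d h x
      = ∑ w : {j : Fin n // j ≠ j0} → Fin d, ∑ a : Fin d,
          univ.sup (fun y => (if h y j0 = a then 1 else 0)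
            + ∑ j : {j : Fin n // j ≠ j0}, (if h y j.1 = w j then 1 else 0)) := by
  rw [← Equiv.sum_comp (Equiv.funSplitAt j0 (Fin d)).symm (fun x => maxSim n d h x)]
  rw [Fintype.sum_prod_type]
  rw [Finset.sum_comm]
  refine Finset.sum_congr rfl fun w _ => Finset.sum_congr rfl fun a _ => ?_
  unfold maxSim
  refine Finset.sup_congr rfl fun y _ => ?_
  rw [sim_split n d j0]
  have h0 : (Equiv.funSplitAt j0 (Fin d)).symm (a, w) j0 = a := by
    simp [Equiv.funSplitAt, Equiv.piSplitAt]
  have h1 : ∀ j : {j : Fin n // j ≠ j0},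
      (Equiv.funSplitAt j0 (Fin d)).symm (a, w) j.1 = w j := by
    intro j; simp [Equiv.funSplitAt, Equiv.piSplitAt, j.2]
  rw [h0]
  congr 1
  exact Finset.sum_congr rfl fun j _ => by rw [h1 j]

lemma step (n d : ℕ) (g : Fin d → Fin n → Fin d) (j0 : Fin n) :
    ∑ x : Fin n → Fin d, maxSim n d g x
      ≤ ∑ x : Fin n → Fin d, maxSim n d (fun y => Function.update (g y) j0 y) x := by
  rw [reindex n d g j0, reindex n d _ j0]
  refine Finset.sum_le_sum fun w _ => ?_
  have hR : ∀ a : Fin d,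
      univ.sup (fun y => (if Function.update (g y) j0 y j0 = a then 1 else 0)
        + ∑ j : {j : Fin n // j ≠ j0}, (if Function.update (g y) j0 y j.1 = w j then 1 else 0))
      = univ.sup (fun y => (if y = a then 1 else 0)
        + ∑ j : {j : Fin n // j ≠ j0}, (if g y j.1 = w j then 1 else 0)) := by
    intro a
    refine Finset.sup_congr rfl fun y _ => ?_
    rw [Function.update_self]
    congr 1
    exact Finset.sum_congr rfl fun j _ => by rw [Function.update_of_ne j.2]
  simp only [hR]
  exact core (fun y => g y j0) (fun y => ∑ j : {j : Fin n // j ≠ j0}, if g y j.1 = w j then 1 else 0)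

lemma iterate (n d : ℕ) (f : Fin d → Fin n → Fin d) :
    ∀ k, k ≤ n → ∑ x : Fin n → Fin d, maxSim n d f x
      ≤ ∑ x : Fin n → Fin d, maxSim n d (fun (y : Fin d) (j : Fin n) => if (j : ℕ) < k then y else f y j) x := by
  intro k
  induction k with
  | zero =>
    intro _
    have h0 : (fun (y : Fin d) (j : Fin n) => if (j : ℕ) < 0 then y else f y j) = f := by
      funext y j; rw [if_neg (Nat.not_lt_zero _)]
    rw [h0]
  | succ k ih =>
    intro hk1
    refine le_trans (ih (by omega)) ?_
    have hk : k < n := by omega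
    have h := step n d (fun (y : Fin d) (j : Fin n) => if (j : ℕ) < k then y else f y j) ⟨k, hk⟩
    have hE : (fun (y : Fin d) => Function.update (fun (j : Fin n) => if (j : ℕ) < k then y else f y j)
        (⟨k, hk⟩ : Fin n) y) = fun (y : Fin d) (j : Fin n) => if (j : ℕ) < k + 1 then y else f y j := by
      funext y j
      rcases eq_or_ne j (⟨k, hk⟩ : Fin n) with hj | hj
      · subst hj
        rw [Function.update_self, if_pos (show ((⟨k, hk⟩ : Fin n) : ℕ) < k + 1 from Nat.lt_succ_self k)]
      · rw [Function.update_of_ne hj]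
        have hne : (j : ℕ) ≠ k := fun hc => hj (Fin.ext hc)
        by_cases h2 : (j : ℕ) < k
        · rw [if_pos h2, if_pos (by omega)]
        · rw [if_neg h2, if_neg (by omega)]
    rw [hE] at h
    exact h

/-- For every `n ≥ 1` and `d ≥ 2`, the majority strategy
`g_maj y j = y` is an optimal deterministic strategy. -/
theorem stmt_0 (n d : ℕ) (hn : 1 ≤ n) (hd : 2 ≤ d)
    (f : Fin d → Fin n → Fin d) :
    Value n d f ≤ Value n d (fun y _ => y) := by
  have key : ∑ x : Fin n → Fin d, maxSim n d f x
      ≤ ∑ x : Fin n → Fin d, maxSim n d (fun y _ => y) x := by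
    have h := iterate n d f n (le_refl n)
    have h0 : (fun (y : Fin d) (j : Fin n) => if (j : ℕ) < n then y else f y j)
        = fun (y : Fin d) (_ : Fin n) => y := by
      funext y j; rw [if_pos j.isLt]
    rwa [h0] at h
  unfold Value
  have hpos : (0 : ℚ) < n * d ^ n := by
    have h1 : (0 : ℚ) < n := by exact_mod_cast Nat.pos_of_ne_zero (by omega)
    have h2 : (0 : ℚ) < (d : ℚ) ^ n := by
      have hd0 : (0 : ℚ) < (d : ℚ) := by exact_mod_cast Nat.pos_of_ne_zero (by omega)
      positivity
    exact mul_pos h1 h2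
  rw [div_le_div_iff₀ hpos hpos]
  have hk : (∑ x : Fin n → Fin d, (maxSim n d f x : ℚ))
      ≤ ∑ x : Fin n → Fin d, (maxSim n d (fun y _ => y) x : ℚ) := by
    exact_mod_cast key
  exact mul_le_mul_of_nonneg_right hk (le_of_lt hpos)
end

section
/- If n > 2 and either d > 2 or n is odd, then the number of optimal deterministic strategies is exactly (d!)^n, i.e., the set {g : Fin d → Fin n → Fin d | g is optimal} has cardinality (d!)^n. -/
open Finset

/-! ### Auxiliary definitions and lemmas -/

def Fval (n d : ℕ) (g : Fin d → Fin n → Fin d) : ℕ :=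
  ∑ x : Fin n → Fin d, maxSim n d g x

lemma value_eq (n d : ℕ) (g : Fin d → Fin n → Fin d) :
    Value n d g = (Fval n d g : ℚ) / (n * d ^ n) := by
  unfold Value Fval; push_cast; ring_nf

lemma value_le_value (n d : ℕ) (hn : 0 < n) (hd : 0 < d)
    (f g : Fin d → Fin n → Fin d) :
    Value n d f ≤ Value n d g ↔ Fval n d f ≤ Fval n d g := by
  rw [value_eq, value_eq, div_le_div_iff_of_pos_right, Nat.cast_le]
  positivity

lemma L1 (d : ℕ) (hd : 0 < d) (t : Fin d → ℕ) (c : Fin d → Fin d) :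
    ∑ a : Fin d, (univ.sup fun y => t y + if c y = a then 1 else 0)
      = d * univ.sup t +
        ((univ.filter fun y => t y = univ.sup t).image c).card := by
  have hne : (univ : Finset (Fin d)).Nonempty := ⟨⟨0, hd⟩, Finset.mem_univ _⟩
  have key : ∀ a : Fin d, (univ.sup fun y => t y + if c y = a then 1 else 0)
      = univ.sup t + if a ∈ (univ.filter fun y => t y = univ.sup t).image c then 1 else 0 := by
    intro a
    apply le_antisymm
    · apply Finset.sup_le
      intro y _
      by_cases hca : c y = a
      · by_cases hty : t y = univ.sup t
        · have : a ∈ (univ.filter fun y => t y = univ.sup t).image c :=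
            Finset.mem_image.mpr ⟨y, Finset.mem_filter.mpr ⟨Finset.mem_univ y, hty⟩, hca⟩
          simp only [hca, if_pos rfl, this, if_pos]
          exact Nat.add_le_add_right (Finset.le_sup (Finset.mem_univ y)) 1
        · have h1 : t y ≤ univ.sup t := Finset.le_sup (Finset.mem_univ y)
          have h2 : t y < univ.sup t := lt_of_le_of_ne h1 hty
          have : t y + 1 ≤ univ.sup t := h2
          simp only [hca, if_pos rfl]
          exact le_trans this (Nat.le_add_right _ _)
      · have h1 : t y ≤ univ.sup t := Finset.le_sup (Finset.mem_univ y)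
        simp only [hca, if_neg hca, add_zero]
        exact le_trans h1 (Nat.le_add_right _ _)
    · by_cases hm : a ∈ (univ.filter fun y => t y = univ.sup t).image c
      · obtain ⟨y₀, hy₀, hcy₀⟩ := Finset.mem_image.mp hm
        have hty₀ : t y₀ = univ.sup t := (Finset.mem_filter.mp hy₀).2
        have : t y₀ + (if c y₀ = a then 1 else 0) = univ.sup t + 1 := by
          rw [hty₀, if_pos hcy₀]
        calc univ.sup t + (if _ ∈ _ then 1 else 0) ≤ univ.sup t + 1 := by
              split <;> omega
          _ = t y₀ + (if c y₀ = a then 1 else 0) := this.symm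
          _ ≤ _ := Finset.le_sup (f := fun y => t y + if c y = a then 1 else 0)
                (Finset.mem_univ y₀)
      · obtain ⟨y₀, _, hy₀⟩ := Finset.exists_mem_eq_sup univ hne t
        simp only [hm, if_neg, add_zero]
        calc univ.sup t = t y₀ := hy₀
          _ ≤ t y₀ + (if c y₀ = a then 1 else 0) := Nat.le_add_right _ _
          _ ≤ _ := Finset.le_sup (f := fun y => t y + if c y = a then 1 else 0)
                (Finset.mem_univ y₀)
  rw [Finset.sum_congr rfl fun a _ => key a, Finset.sum_add_distrib]
  congr 1
  · simp [Finset.sum_const, mul_comm]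
  · rw [Finset.sum_ite_mem]
    simp

section
variable {n d : ℕ}

def tSim (n d : ℕ) (j : Fin n) (g : Fin d → Fin n → Fin d)
    (y : Fin d) (x : Fin n → Fin d) : ℕ :=
  ((univ.erase j).filter fun k => g y k = x k).card

lemma sim_update (j : Fin n) (g : Fin d → Fin n → Fin d) (y : Fin d)
    (x : Fin n → Fin d) (a : Fin d) :
    Sim n d (g y) (Function.update x j a)
      = tSim n d j g y x + (if g y j = a then 1 else 0) := by
  unfold Sim tSim
  rw [Finset.card_filter, Finset.card_filter,
    Finset.sum_eq_add_sum_sdiff_singleton_of_mem (Finset.mem_univ j)]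
  rw [Function.update_self, add_comm]
  congr 1
  · rw [show (univ : Finset (Fin n)) \ {j} = univ.erase j by
      rw [Finset.sdiff_singleton_eq_erase]]
    apply Finset.sum_congr rfl
    intro k hk
    rw [Function.update_of_ne (Finset.ne_of_mem_erase hk)]

lemma tSim_update (j : Fin n) (g : Fin d → Fin n → Fin d) (y : Fin d)
    (x : Fin n → Fin d) (a : Fin d) :
    tSim n d j g y (Function.update x j a) = tSim n d j g y x := by
  unfold tSim
  apply congrArg
  apply Finset.filter_congr
  intro k hk
  rw [Function.update_of_ne (Finset.ne_of_mem_erase hk)]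

lemma tSim_colUpdate (j : Fin n) (g : Fin d → Fin n → Fin d) (c' : Fin d → Fin d)
    (y : Fin d) (x : Fin n → Fin d) :
    tSim n d j (fun y => Function.update (g y) j (c' y)) y x = tSim n d j g y x := by
  unfold tSim
  apply congrArg
  apply Finset.filter_congr
  intro k hk
  simp only []
  rw [Function.update_of_ne (Finset.ne_of_mem_erase hk)]

def updEquiv (n d : ℕ) (j : Fin n) :
    ((Fin n → Fin d) × Fin d) ≃ ((Fin n → Fin d) × Fin d) where
  toFun p := (Function.update p.1 j p.2, p.1 j)
  invFun p := (Function.update p.1 j p.2, p.1 j)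
  left_inv p := by
    simp [Function.update_idem, Function.update_self, Function.update_eq_self]
  right_inv p := by
    simp [Function.update_idem, Function.update_self, Function.update_eq_self]

lemma sum_update (j : Fin n) (f : (Fin n → Fin d) → ℕ) :
    ∑ x : Fin n → Fin d, ∑ a : Fin d, f (Function.update x j a)
      = d * ∑ x : Fin n → Fin d, f x := by
  have := Equiv.sum_comp (updEquiv n d j) (fun p : (Fin n → Fin d) × Fin d => f p.1)
  rw [Fintype.sum_prod_type] at this
  simp only [updEquiv, Equiv.coe_fn_mk] at this
  rw [this, Fintype.sum_prod_type]
  simp [Finset.sum_const, mul_comm, Finset.mul_sum]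

/-- argmax set of `tSim` at `x`. -/
def argA (n d : ℕ) (j : Fin n) (g : Fin d → Fin n → Fin d) (x : Fin n → Fin d) :
    Finset (Fin d) :=
  univ.filter fun y => tSim n d j g y x = univ.sup fun y => tSim n d j g y x

/-- Decomposition of (d times) the total value along column `j`. -/
lemma d_mul_F (hd : 0 < d) (j : Fin n) (g : Fin d → Fin n → Fin d) :
    d * Fval n d g = ∑ x : Fin n → Fin d,
      (d * (univ.sup fun y => tSim n d j g y x)
        + ((argA n d j g x).image fun y => g y j).card) := by
  rw [Fval, ← sum_update j (maxSim n d g)]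
  apply Finset.sum_congr rfl
  intro x _
  have h1 : ∀ a : Fin d, maxSim n d g (Function.update x j a)
      = univ.sup fun y => tSim n d j g y x + if g y j = a then 1 else 0 := by
    intro a
    unfold maxSim
    apply Finset.sup_congr rfl
    intro y _
    exact sim_update j g y x a
  rw [Finset.sum_congr rfl fun a _ => h1 a]
  exact L1 d hd (fun y => tSim n d j g y x) (fun y => g y j)

lemma argA_colUpdate (j : Fin n) (c' : Fin d → Fin d) (g : Fin d → Fin n → Fin d)
    (x : Fin n → Fin d) :
    argA n d j (fun y => Function.update (g y) j (c' y)) x = argA n d j g x := by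
  unfold argA
  have h : ∀ y, tSim n d j (fun y => Function.update (g y) j (c' y)) y x
      = tSim n d j g y x := fun y => tSim_colUpdate j g c' y x
  apply Finset.filter_congr
  intro y _
  rw [h y, funext h]

lemma sup_tSim_colUpdate (j : Fin n) (c' : Fin d → Fin d) (g : Fin d → Fin n → Fin d)
    (x : Fin n → Fin d) :
    (univ.sup fun y => tSim n d j (fun y => Function.update (g y) j (c' y)) y x)
      = univ.sup fun y => tSim n d j g y x := by
  apply Finset.sup_congr rfl
  intro y _
  exact tSim_colUpdate j g c' y x

lemma newcol_image (j : Fin n) (c' : Fin d → Fin d) (g : Fin d → Fin n → Fin d)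
    (s : Finset (Fin d)) (hc' : Function.Injective c') :
    (s.image fun y => Function.update (g y) j (c' y) j).card = s.card := by
  have hfun : (fun y => Function.update (g y) j (c' y) j) = c' := by
    funext y; simp
  rw [hfun]
  exact Finset.card_image_of_injective _ hc'

lemma F_colUpdate_le (hd : 0 < d) (j : Fin n) (c' : Fin d → Fin d)
    (hc' : Function.Injective c') (g : Fin d → Fin n → Fin d) :
    Fval n d g ≤ Fval n d (fun y => Function.update (g y) j (c' y)) := by
  refine Nat.le_of_mul_le_mul_left ?_ hd
  rw [d_mul_F hd j, d_mul_F hd j]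
  apply Finset.sum_le_sum
  intro x _
  rw [sup_tSim_colUpdate, argA_colUpdate]
  have h1 : ((argA n d j g x).image fun y => g y j).card ≤ (argA n d j g x).card :=
    Finset.card_image_le
  have h2 := newcol_image j c' g (argA n d j g x) hc'
  omega

lemma F_colUpdate_lt (hd : 0 < d) (j : Fin n) (c' : Fin d → Fin d)
    (hc' : Function.Injective c') (g : Fin d → Fin n → Fin d)
    (x₀ : Fin n → Fin d) (y₁ y₂ : Fin d) (hy : y₁ ≠ y₂)
    (hcol : g y₁ j = g y₂ j)
    (h₁ : y₁ ∈ argA n d j g x₀) (h₂ : y₂ ∈ argA n d j g x₀) :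
    Fval n d g < Fval n d (fun y => Function.update (g y) j (c' y)) := by
  have hdd : 0 < d := hd
  refine Nat.lt_of_mul_lt_mul_left (a := d) ?_
  rw [d_mul_F hd j, d_mul_F hd j]
  apply Finset.sum_lt_sum
  · intro x _
    rw [sup_tSim_colUpdate, argA_colUpdate]
    have h1 : ((argA n d j g x).image fun y => g y j).card ≤ (argA n d j g x).card :=
      Finset.card_image_le
    have h2 := newcol_image j c' g (argA n d j g x) hc'
    omega
  · refine ⟨x₀, Finset.mem_univ x₀, ?_⟩
    rw [sup_tSim_colUpdate, argA_colUpdate]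
    have h1 : ((argA n d j g x₀).image fun y => g y j).card < (argA n d j g x₀).card := by
      refine lt_of_le_of_ne Finset.card_image_le ?_
      intro hEq
      have hinj := Finset.card_image_iff.mp hEq
      exact hy (hinj (Finset.mem_coe.mpr h₁) (Finset.mem_coe.mpr h₂) hcol)
    have h2 := newcol_image j c' g (argA n d j g x₀) hc'
    omega

/-- Normalisation: make all columns except `j` equal to the identity. -/
def normCols (n d : ℕ) (j : Fin n) (g : Fin d → Fin n → Fin d) :
    Fin d → Fin n → Fin d :=
  fun y k => if k = j then g y j else y

lemma F_le_normCols (hd : 0 < d) (j : Fin n) (g : Fin d → Fin n → Fin d) :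
    Fval n d g ≤ Fval n d (normCols n d j g) := by
  set gS : Finset (Fin n) → (Fin d → Fin n → Fin d) :=
    fun S y k => if k ∈ S.erase j then y else g y k with hgS
  have main : ∀ S : Finset (Fin n), Fval n d g ≤ Fval n d (gS S) := by
    intro S
    induction S using Finset.induction_on with
    | empty =>
        have : gS ∅ = g := by
          funext y k; simp [hgS]
        rw [this]
    | insert k S hk ih =>
        rcases eq_or_ne k j with hkj | hkj
        · have : gS (insert k S) = gS S := by
            funext y k'
            simp only [hgS]
            rw [hkj, Finset.erase_insert_eq_erase]
          rw [this]; exact ih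
        · have heq : gS (insert k S) = fun y => Function.update (gS S y) k y := by
            funext y k'
            rcases eq_or_ne k' k with h' | h'
            · subst h'
              rw [Function.update_self]
              simp only [hgS]
              rw [if_pos (Finset.mem_erase.mpr ⟨hkj, Finset.mem_insert_self _ _⟩)]
            · rw [Function.update_of_ne h']
              simp only [hgS]
              congr 1
              simp [Finset.mem_erase, Finset.mem_insert, h']
          calc Fval n d g ≤ Fval n d (gS S) := ih
            _ ≤ _ := by
                rw [heq]
                exact F_colUpdate_le hd k (fun y => y) Function.injective_id (gS S)
  have huniv : gS univ = normCols n d j g := by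
    funext y k
    simp only [hgS, normCols, Finset.mem_erase, Finset.mem_univ, and_true]
    rcases eq_or_ne k j with h | h <;> simp [h]
  rw [← huniv]
  exact main univ

lemma tSim_votes (j : Fin n) (g : Fin d → Fin n → Fin d)
    (hinj : ∀ k : Fin n, k ≠ j → Function.Injective fun y => g y k)
    (v : Fin n → Fin d) (y : Fin d) :
    tSim n d j g y (fun k => g (v k) k)
      = ((univ.erase j).filter fun k => v k = y).card := by
  unfold tSim
  congr 1
  apply Finset.filter_congr
  intro k hk
  have hkj : k ≠ j := Finset.ne_of_mem_erase hk
  simp only [eq_iff_iff]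
  constructor
  · intro hgk
    exact ((hinj k hkj) hgk).symm
  · intro hv
    rw [hv]

lemma mem_argA_of (j : Fin n) (g : Fin d → Fin n → Fin d) (x : Fin n → Fin d)
    (m : ℕ) (hall : ∀ y, tSim n d j g y x ≤ m) (y₀ : Fin d)
    (hy₀ : tSim n d j g y₀ x = m) : y₀ ∈ argA n d j g x := by
  have hsup : (univ.sup fun y => tSim n d j g y x) = m := by
    apply le_antisymm
    · exact Finset.sup_le fun y _ => hall y
    · rw [← hy₀]
      exact Finset.le_sup (f := fun y => tSim n d j g y x) (Finset.mem_univ y₀)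
  exact Finset.mem_filter.mpr ⟨Finset.mem_univ y₀, by rw [hy₀, hsup]⟩

lemma exists_bad (hn : 2 < n) (hd : 2 ≤ d) (h : 2 < d ∨ Odd n) (j : Fin n)
    (g : Fin d → Fin n → Fin d)
    (hinj : ∀ k : Fin n, k ≠ j → Function.Injective fun y => g y k)
    (y₁ y₂ : Fin d) (hy : y₁ ≠ y₂) :
    ∃ x : Fin n → Fin d, y₁ ∈ argA n d j g x ∧ y₂ ∈ argA n d j g x := by
  set E : Finset (Fin n) := univ.erase j with hE
  have hEcard : E.card = n - 1 := by
    rw [hE, Finset.card_erase_of_mem (Finset.mem_univ j), Finset.card_univ,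
      Fintype.card_fin]
  -- it suffices to construct a vote function with balanced maximal counts
  suffices hv : ∃ (v : Fin n → Fin d) (m : ℕ),
      (E.filter fun k => v k = y₁).card = m ∧
      (E.filter fun k => v k = y₂).card = m ∧
      (∀ y, (E.filter fun k => v k = y).card ≤ m) by
    obtain ⟨v, m, hv1, hv2, hvall⟩ := hv
    refine ⟨fun k => g (v k) k, ?_, ?_⟩
    · exact mem_argA_of j g _ m (fun y => by rw [tSim_votes j g hinj v y]; exact hvall y)
        y₁ (by rw [tSim_votes j g hinj v y₁]; exact hv1)
    · exact mem_argA_of j g _ m (fun y => by rw [tSim_votes j g hinj v y]; exact hvall y)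
        y₂ (by rw [tSim_votes j g hinj v y₂]; exact hv2)
  rcases Nat.even_or_odd n with hpar | hpar
  · -- n even, hence d ≥ 3
    have hd3 : 2 < d := by
      rcases h with h | h
      · exact h
      · exact absurd h (by simpa using hpar)
    obtain ⟨y₃, hy₃⟩ : ∃ y₃ : Fin d, y₃ ∉ ({y₁, y₂} : Finset (Fin d)) := by
      by_contra hcon
      push_neg at hcon
      have h1 : (univ : Finset (Fin d)) ⊆ {y₁, y₂} := fun y _ => hcon y
      have h2 := Finset.card_le_card h1
      have h3 : ({y₁, y₂} : Finset (Fin d)).card ≤ 2 :=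
        le_trans (Finset.card_insert_le _ _) (by simp)
      rw [Finset.card_univ, Fintype.card_fin] at h2
      omega
    have hy31 : y₃ ≠ y₁ := fun hc => hy₃ (by simp [hc])
    have hy32 : y₃ ≠ y₂ := fun hc => hy₃ (by simp [hc])
    set m : ℕ := (n - 2) / 2 with hm
    have hn4 : 4 ≤ n := by
      rcases hpar with ⟨t, ht⟩; omega
    have hm2 : n - 2 = 2 * m := by
      rcases hpar with ⟨t, ht⟩; omega
    have hm1 : 1 ≤ m := by omega
    obtain ⟨k₀, hk₀⟩ : E.Nonempty :=
      Finset.card_pos.mp (by rw [hEcard]; omega)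
    have hcard' : (E.erase k₀).card = n - 2 := by
      rw [Finset.card_erase_of_mem hk₀, hEcard]; omega
    obtain ⟨S₁, hS₁sub, hS₁card⟩ : ∃ S₁ ⊆ E.erase k₀, S₁.card = m :=
      Finset.exists_subset_card_eq (by omega)
    have hk₀S₁ : k₀ ∉ S₁ := fun hc => (Finset.mem_erase.mp (hS₁sub hc)).1 rfl
    refine ⟨fun k => if k = k₀ then y₃ else if k ∈ S₁ then y₁ else y₂, m, ?_, ?_, ?_⟩
    · -- count for y₁ : S₁
      have : (E.filter fun k => (if k = k₀ then y₃ else if k ∈ S₁ then y₁ else y₂) = y₁)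
          = S₁ := by
        ext k
        simp only [Finset.mem_filter]
        constructor
        · rintro ⟨hkE, hkv⟩
          by_cases h1 : k = k₀
          · rw [if_pos h1] at hkv; exact absurd hkv hy31
          · rw [if_neg h1] at hkv
            by_cases h2 : k ∈ S₁
            · exact h2
            · rw [if_neg h2] at hkv; exact absurd hkv.symm hy
        · intro hkS
          have hkk₀ : k ≠ k₀ := fun hc => hk₀S₁ (hc ▸ hkS)
          exact ⟨(Finset.mem_erase.mp (hS₁sub hkS)).2, by rw [if_neg hkk₀, if_pos hkS]⟩
      rw [this, hS₁card]
    · -- count for y₂ : (E.erase k₀) \ S₁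
      have : (E.filter fun k => (if k = k₀ then y₃ else if k ∈ S₁ then y₁ else y₂) = y₂)
          = (E.erase k₀) \ S₁ := by
        ext k
        simp only [Finset.mem_filter, Finset.mem_sdiff, Finset.mem_erase]
        constructor
        · rintro ⟨hkE, hkv⟩
          by_cases h1 : k = k₀
          · rw [if_pos h1] at hkv; exact absurd hkv hy32
          · rw [if_neg h1] at hkv
            by_cases h2 : k ∈ S₁
            · rw [if_pos h2] at hkv; exact absurd hkv hy
            · exact ⟨⟨h1, hkE⟩, h2⟩
        · rintro ⟨⟨h1, hkE⟩, h2⟩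
          exact ⟨hkE, by rw [if_neg h1, if_neg h2]⟩
      rw [this, Finset.card_sdiff_of_subset hS₁sub, hcard', hS₁card]
      omega
    · -- all counts ≤ m
      intro y
      by_cases hyy1 : y = y₁
      · rw [hyy1]
        -- same as first computation; bound by card S₁
        refine le_trans (Finset.card_le_card ?_) (le_of_eq hS₁card)
        intro k hk
        obtain ⟨hkE, hkv⟩ := Finset.mem_filter.mp hk
        beta_reduce at hkv
        by_cases h1 : k = k₀
        · rw [if_pos h1] at hkv; exact absurd hkv hy31
        · rw [if_neg h1] at hkv
          by_cases h2 : k ∈ S₁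
          · exact h2
          · rw [if_neg h2] at hkv; exact absurd hkv.symm hy
      by_cases hyy2 : y = y₂
      · rw [hyy2]
        have hsub : (E.filter fun k => (if k = k₀ then y₃ else if k ∈ S₁ then y₁ else y₂) = y₂)
            ⊆ (E.erase k₀) \ S₁ := by
          intro k hk
          obtain ⟨hkE, hkv⟩ := Finset.mem_filter.mp hk
          beta_reduce at hkv
          simp only [Finset.mem_sdiff, Finset.mem_erase]
          by_cases h1 : k = k₀
          · rw [if_pos h1] at hkv; exact absurd hkv hy32
          · rw [if_neg h1] at hkv
            by_cases h2 : k ∈ S₁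
            · rw [if_pos h2] at hkv; exact absurd hkv hy
            · exact ⟨⟨h1, hkE⟩, h2⟩
        refine le_trans (Finset.card_le_card hsub) ?_
        rw [Finset.card_sdiff_of_subset hS₁sub, hcard', hS₁card]
        omega
      · -- y ∉ {y₁, y₂}: only k₀ can vote y
        have hsub : (E.filter fun k => (if k = k₀ then y₃ else if k ∈ S₁ then y₁ else y₂) = y)
            ⊆ {k₀} := by
          intro k hk
          obtain ⟨hkE, hkv⟩ := Finset.mem_filter.mp hk
          beta_reduce at hkv
          by_cases h1 : k = k₀
          · simp [h1]
          · rw [if_neg h1] at hkv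
            by_cases h2 : k ∈ S₁
            · rw [if_pos h2] at hkv; exact absurd hkv.symm hyy1
            · rw [if_neg h2] at hkv; exact absurd hkv.symm hyy2
        refine le_trans (Finset.card_le_card hsub) ?_
        simp [hm1]
  · -- n odd
    set m : ℕ := (n - 1) / 2 with hm
    have hm2 : n - 1 = 2 * m := by
      rcases hpar with ⟨t, ht⟩; omega
    have hm1 : 1 ≤ m := by omega
    obtain ⟨S₁, hS₁sub, hS₁card⟩ : ∃ S₁ ⊆ E, S₁.card = m :=
      Finset.exists_subset_card_eq (by omega)
    refine ⟨fun k => if k ∈ S₁ then y₁ else y₂, m, ?_, ?_, ?_⟩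
    · have : (E.filter fun k => (if k ∈ S₁ then y₁ else y₂) = y₁) = S₁ := by
        ext k
        simp only [Finset.mem_filter]
        constructor
        · rintro ⟨hkE, hkv⟩
          by_cases h2 : k ∈ S₁
          · exact h2
          · rw [if_neg h2] at hkv; exact absurd hkv.symm hy
        · intro hkS
          exact ⟨hS₁sub hkS, by rw [if_pos hkS]⟩
      rw [this, hS₁card]
    · have : (E.filter fun k => (if k ∈ S₁ then y₁ else y₂) = y₂) = E \ S₁ := by
        ext k
        simp only [Finset.mem_filter, Finset.mem_sdiff]
        constructor
        · rintro ⟨hkE, hkv⟩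
          by_cases h2 : k ∈ S₁
          · rw [if_pos h2] at hkv; exact absurd hkv hy
          · exact ⟨hkE, h2⟩
        · rintro ⟨hkE, h2⟩
          exact ⟨hkE, by rw [if_neg h2]⟩
      rw [this, Finset.card_sdiff_of_subset hS₁sub, hEcard, hS₁card]
      omega
    · intro y
      by_cases hyy1 : y = y₁
      · rw [hyy1]
        refine le_trans (Finset.card_le_card ?_) (le_of_eq hS₁card)
        intro k hk
        obtain ⟨hkE, hkv⟩ := Finset.mem_filter.mp hk
        beta_reduce at hkv
        by_cases h2 : k ∈ S₁
        · exact h2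
        · rw [if_neg h2] at hkv; exact absurd hkv.symm hy
      by_cases hyy2 : y = y₂
      · rw [hyy2]
        have hsub : (E.filter fun k => (if k ∈ S₁ then y₁ else y₂) = y₂) ⊆ E \ S₁ := by
          intro k hk
          obtain ⟨hkE, hkv⟩ := Finset.mem_filter.mp hk
          beta_reduce at hkv
          simp only [Finset.mem_sdiff]
          by_cases h2 : k ∈ S₁
          · rw [if_pos h2] at hkv; exact absurd hkv hy
          · exact ⟨hkE, h2⟩
        refine le_trans (Finset.card_le_card hsub) ?_
        rw [Finset.card_sdiff_of_subset hS₁sub, hEcard, hS₁card]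
        omega
      · have hsub : (E.filter fun k => (if k ∈ S₁ then y₁ else y₂) = y) ⊆ ∅ := by
          intro k hk
          obtain ⟨hkE, hkv⟩ := Finset.mem_filter.mp hk
          beta_reduce at hkv
          by_cases h2 : k ∈ S₁
          · rw [if_pos h2] at hkv; exact absurd hkv.symm hyy1
          · rw [if_neg h2] at hkv; exact absurd hkv.symm hyy2
        refine le_trans (Finset.card_le_card hsub) ?_
        simp

lemma fval_eq_of_property1 (hd : 0 < d) (g g' : Fin d → Fin n → Fin d)
    (hg : Property1 n d g) (hg' : Property1 n d g') :
    Fval n d g = Fval n d g' := by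
  -- per-column bijections
  have hbij : ∀ j : Fin n, Function.Bijective fun y => g y j := fun j =>
    Finite.injective_iff_bijective.mp (hg j)
  have hbij' : ∀ j : Fin n, Function.Bijective fun y => g' y j := fun j =>
    Finite.injective_iff_bijective.mp (hg' j)
  set σ : Fin n → (Fin d ≃ Fin d) := fun j => Equiv.ofBijective _ (hbij j) with hσ
  set σ' : Fin n → (Fin d ≃ Fin d) := fun j => Equiv.ofBijective _ (hbij' j) with hσ'
  set Φ : (Fin n → Fin d) ≃ (Fin n → Fin d) :=
    Equiv.piCongrRight fun j => (σ j).symm.trans (σ' j) with hΦ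
  have key : ∀ x : Fin n → Fin d, maxSim n d g' (Φ x) = maxSim n d g x := by
    intro x
    unfold maxSim
    apply Finset.sup_congr rfl
    intro y _
    unfold Sim
    congr 1
    apply Finset.filter_congr
    intro j _
    have hΦx : Φ x j = σ' j ((σ j).symm (x j)) := rfl
    have h1 : g' y j = σ' j y := rfl
    rw [hΦx, h1, (σ' j).injective.eq_iff]
    constructor
    · intro hyx
      have : σ j y = σ j ((σ j).symm (x j)) := congrArg (σ j) hyx
      rw [Equiv.apply_symm_apply] at this
      exact this
    · intro hyx
      have : (σ j).symm (σ j y) = (σ j).symm (x j) := by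
        rw [show σ j y = x j from hyx]
      rwa [Equiv.symm_apply_apply] at this
  calc Fval n d g = ∑ x : Fin n → Fin d, maxSim n d g' (Φ x) := by
        unfold Fval
        exact (Finset.sum_congr rfl fun x _ => (key x).symm)
    _ = Fval n d g' := Equiv.sum_comp Φ (maxSim n d g')

lemma optimal_p1 (hn : 2 < n) (hd : 2 ≤ d) (h : 2 < d ∨ Odd n)
    (g : Fin d → Fin n → Fin d) (hopt : IsOptimal n d g) : Property1 n d g := by
  have hn0 : 0 < n := by omega
  have hd0 : 0 < d := by omega
  intro j
  by_contra hninj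
  rw [Function.not_injective_iff] at hninj
  obtain ⟨y₁, y₂, hcol, hy⟩ := hninj
  set g₂ := normCols n d j g with hg₂
  have h1 : Fval n d g ≤ Fval n d g₂ := F_le_normCols hd0 j g
  have hinj₂ : ∀ k : Fin n, k ≠ j → Function.Injective fun y => g₂ y k := by
    intro k hk a b hab
    simp only [hg₂, normCols, if_neg hk] at hab
    exact hab
  obtain ⟨x₀, hx₁, hx₂⟩ := exists_bad hn hd h j g₂ hinj₂ y₁ y₂ hy
  have hcol₂ : g₂ y₁ j = g₂ y₂ j := by
    simp only [hg₂, normCols, if_pos rfl]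
    exact hcol
  have h2 : Fval n d g₂ < Fval n d (fun y => Function.update (g₂ y) j y) :=
    F_colUpdate_lt hd0 j (fun y => y) Function.injective_id g₂ x₀ y₁ y₂ hy hcol₂ hx₁ hx₂
  have h3 := hopt (fun y => Function.update (g₂ y) j y)
  rw [value_le_value n d hn0 hd0] at h3
  omega

lemma optimal_iff (hn : 2 < n) (hd : 2 ≤ d) (h : 2 < d ∨ Odd n)
    (g : Fin d → Fin n → Fin d) :
    IsOptimal n d g ↔ Property1 n d g := by
  have hn0 : 0 < n := by omega
  have hd0 : 0 < d := by omega
  constructor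
  · exact optimal_p1 hn hd h g
  · intro hp1
    haveI : Nonempty (Fin d) := ⟨⟨0, hd0⟩⟩
    obtain ⟨g₀, hg₀⟩ := Finite.exists_max (Value n d)
    have hg₀opt : IsOptimal n d g₀ := hg₀
    have hg₀p1 : Property1 n d g₀ := optimal_p1 hn hd h g₀ hg₀opt
    intro f
    calc Value n d f ≤ Value n d g₀ := hg₀ f
      _ = Value n d g := by
          rw [value_eq, value_eq, fval_eq_of_property1 hd0 g₀ g hg₀p1 hp1]

end

theorem stmt_1 (n d : ℕ) (hn : 2 < n) (hd : 2 ≤ d) (h : 2 < d ∨ Odd n) :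
    {g : Fin d → Fin n → Fin d | IsOptimal n d g}.ncard = d.factorial ^ n := by
  have hset : {g : Fin d → Fin n → Fin d | IsOptimal n d g}
      = {g : Fin d → Fin n → Fin d | Property1 n d g} :=
    Set.ext fun g => optimal_iff hn hd h g
  rw [hset, ← Nat.card_coe_set_eq]
  have e1 : {g : Fin d → Fin n → Fin d // Property1 n d g}
      ≃ (Fin n → (Fin d ↪ Fin d)) := by
    refine Equiv.trans ?_ (Equiv.trans (Equiv.subtypePiEquivPi
      (p := fun (_ : Fin n) (c : Fin d → Fin d) => Function.Injective c))
      (Equiv.piCongrRight fun _ => Equiv.subtypeInjectiveEquivEmbedding _ _))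
    exact { toFun := fun g => ⟨fun j y => g.1 y j, g.2⟩
            invFun := fun M => ⟨fun y j => M.1 j y, fun j => M.2 j⟩
            left_inv := fun g => rfl
            right_inv := fun M => rfl }
  have e2 : ↑{g : Fin d → Fin n → Fin d | Property1 n d g}
      ≃ (Fin n → (Fin d ↪ Fin d)) :=
    (Equiv.subtypeEquivRight (fun g => Iff.rfl)).trans e1
  rw [Nat.card_congr e2, Nat.card_eq_fintype_card, Fintype.card_fun,
    Fintype.card_embedding_eq, Fintype.card_fin, Fintype.card_fin,
    Nat.descFactorial_self]
end

section
/- If n > 2 and either d > 2 or n is odd, then a deterministic strategy g is optimal if and only if g satisfies Property 1, i.e., for every index j : Fin n the map y ↦ g y j is injective. -/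
open Finset

namespace Stmt2

variable {n d : ℕ}

/-- Total (unnormalized) value of a strategy. -/
def N (n d : ℕ) (g : Fin d → Fin n → Fin d) : ℕ := ∑ x : Fin n → Fin d, maxSim n d g x

/-- Split a word into its value at `j0` and the rest. -/
def splitEquiv (n d : ℕ) (j0 : Fin n) :
    (Fin d × ({j : Fin n // j ≠ j0} → Fin d)) ≃ (Fin n → Fin d) where
  toFun p := fun j => if h : j = j0 then p.1 else p.2 ⟨j, h⟩
  invFun x := (x j0, fun j' => x j'.1)
  left_inv p := by
    refine Prod.ext ?_ ?_
    · simp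
    · funext j'
      simp [j'.2]
  right_inv x := by
    funext j
    by_cases h : j = j0
    · subst h; simp
    · simp [h]

/-- Similarity restricted to the columns other than `j0`. -/
def Rg (g : Fin d → Fin n → Fin d) (j0 : Fin n) (y : Fin d)
    (x' : {j : Fin n // j ≠ j0} → Fin d) : ℕ :=
  ∑ j' : {j : Fin n // j ≠ j0}, if g y j'.1 = x' j' then 1 else 0

lemma sim_split (g : Fin d → Fin n → Fin d) (j0 : Fin n) (y a : Fin d)
    (x' : {j : Fin n // j ≠ j0} → Fin d) :
    Sim n d (g y) (splitEquiv n d j0 (a, x'))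
      = (if g y j0 = a then 1 else 0) + Rg g j0 y x' := by
  rw [Sim, Finset.card_filter, ← Finset.add_sum_erase _ _ (Finset.mem_univ j0)]
  congr 1
  · have : splitEquiv n d j0 (a, x') j0 = a := by simp [splitEquiv]
    rw [this]
  · rw [Finset.sum_subtype (p := fun j => j ≠ j0) _
      (fun j => by simp [Finset.mem_erase])]
    refine Finset.sum_congr rfl fun j' _ => ?_
    have : splitEquiv n d j0 (a, x') j'.1 = x' j' := by simp [splitEquiv, j'.2]
    rw [this]

lemma sup_exchange (hd : 0 < d) (c : Fin d → Fin d) (R : Fin d → ℕ) (a : Fin d) :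
    univ.sup (fun y => (if c y = a then 1 else 0) + R y)
      = univ.sup R + (if a ∈ (univ.filter fun y => R y = univ.sup R).image c then 1 else 0) := by
  have hne : (univ : Finset (Fin d)).Nonempty := ⟨⟨0, hd⟩, mem_univ _⟩
  obtain ⟨y0, -, hy0⟩ := Finset.exists_mem_eq_sup univ hne R
  by_cases hmem : a ∈ (univ.filter fun y => R y = univ.sup R).image c
  · obtain ⟨y, hyA, hcy⟩ := Finset.mem_image.1 hmem
    have hyM : R y = univ.sup R := (Finset.mem_filter.1 hyA).2
    rw [if_pos hmem]
    apply le_antisymm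
    · apply Finset.sup_le
      intro z _
      have hz : R z ≤ univ.sup R := Finset.le_sup (mem_univ z)
      split <;> omega
    · calc univ.sup R + 1 = (if c y = a then 1 else 0) + R y := by rw [if_pos hcy, hyM]; omega
        _ ≤ _ := Finset.le_sup (f := fun y => (if c y = a then 1 else 0) + R y) (mem_univ y)
  · rw [if_neg hmem]
    apply le_antisymm
    · apply Finset.sup_le
      intro z _
      have hz : R z ≤ univ.sup R := Finset.le_sup (mem_univ z)
      by_cases hcz : c z = a
      · have hzA : ¬ R z = univ.sup R := by
          intro hEq
          exact hmem (Finset.mem_image.2 ⟨z, Finset.mem_filter.2 ⟨mem_univ z, hEq⟩, hcz⟩)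
        rw [if_pos hcz]; omega
      · rw [if_neg hcz]; omega
    · calc univ.sup R + 0 = R y0 := by omega
        _ ≤ (if c y0 = a then 1 else 0) + R y0 := Nat.le_add_left _ _
        _ ≤ _ := Finset.le_sup (f := fun y => (if c y = a then 1 else 0) + R y) (mem_univ y0)

lemma sum_exchange (hd : 0 < d) (c : Fin d → Fin d) (R : Fin d → ℕ) :
    ∑ a : Fin d, univ.sup (fun y => (if c y = a then 1 else 0) + R y)
      = d * univ.sup R + ((univ.filter fun y => R y = univ.sup R).image c).card := by
  have h1 : ∀ a : Fin d, univ.sup (fun y => (if c y = a then 1 else 0) + R y)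
      = univ.sup R + (if a ∈ (univ.filter fun y => R y = univ.sup R).image c then 1 else 0) :=
    fun a => sup_exchange hd c R a
  rw [Finset.sum_congr rfl fun a _ => h1 a, Finset.sum_add_distrib, Finset.sum_const,
    Finset.card_univ, Fintype.card_fin, smul_eq_mul,
    Finset.sum_ite_mem, Finset.univ_inter, Finset.sum_const, smul_eq_mul, mul_one]

lemma N_formula (hd : 0 < d) (g : Fin d → Fin n → Fin d) (j0 : Fin n) :
    N n d g = ∑ x' : {j : Fin n // j ≠ j0} → Fin d,
      (d * univ.sup (fun y => Rg g j0 y x')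
        + ((univ.filter fun y => Rg g j0 y x' = univ.sup (fun y => Rg g j0 y x')).image
            (fun y => g y j0)).card) := by
  calc N n d g = ∑ p : Fin d × ({j : Fin n // j ≠ j0} → Fin d),
        maxSim n d g (splitEquiv n d j0 p) := (Equiv.sum_comp _ _).symm
    _ = ∑ a : Fin d, ∑ x' : {j : Fin n // j ≠ j0} → Fin d,
        maxSim n d g (splitEquiv n d j0 (a, x')) := Fintype.sum_prod_type _
    _ = ∑ x' : {j : Fin n // j ≠ j0} → Fin d, ∑ a : Fin d,
        maxSim n d g (splitEquiv n d j0 (a, x')) := Finset.sum_comm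
    _ = _ := by
        refine Finset.sum_congr rfl fun x' _ => ?_
        have h1 : ∀ a : Fin d, maxSim n d g (splitEquiv n d j0 (a, x'))
            = univ.sup (fun y => (if g y j0 = a then 1 else 0) + Rg g j0 y x') := by
          intro a
          simp only [maxSim]
          exact Finset.sup_congr rfl fun y _ => sim_split g j0 y a x'
        rw [Finset.sum_congr rfl fun a _ => h1 a]
        exact sum_exchange hd _ _

/-- Replace column `j0` by the identity. -/
def swapAt (g : Fin d → Fin n → Fin d) (j0 : Fin n) : Fin d → Fin n → Fin d :=
  fun y j => if j = j0 then y else g y j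

lemma Rg_swapAt (g : Fin d → Fin n → Fin d) (j0 : Fin n) :
    Rg (swapAt g j0) j0 = Rg g j0 := by
  funext y x'
  exact Finset.sum_congr rfl fun j' _ => by rw [swapAt, if_neg j'.2]

lemma N_swapAt_formula (hd : 0 < d) (g : Fin d → Fin n → Fin d) (j0 : Fin n) :
    N n d (swapAt g j0) = ∑ x' : {j : Fin n // j ≠ j0} → Fin d,
      (d * univ.sup (fun y => Rg g j0 y x')
        + (univ.filter fun y => Rg g j0 y x' = univ.sup (fun y => Rg g j0 y x')).card) := by
  rw [N_formula hd (swapAt g j0) j0, Rg_swapAt]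
  have hcol : (fun y => swapAt g j0 y j0) = (fun y : Fin d => y) := funext fun y => if_pos rfl
  rw [hcol]
  simp [Finset.image_id']

lemma N_le_swapAt (hd : 0 < d) (g : Fin d → Fin n → Fin d) (j0 : Fin n) :
    N n d g ≤ N n d (swapAt g j0) := by
  rw [N_formula hd g j0, N_swapAt_formula hd g j0]
  exact Finset.sum_le_sum fun x' _ => Nat.add_le_add_left Finset.card_image_le _

lemma N_eq_swapAt (hd : 0 < d) (g : Fin d → Fin n → Fin d) (j0 : Fin n)
    (hinj : Function.Injective fun y => g y j0) :
    N n d g = N n d (swapAt g j0) := by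
  rw [N_formula hd g j0, N_swapAt_formula hd g j0]
  exact Finset.sum_congr rfl fun x' _ => by
    rw [Finset.card_image_of_injective _ hinj]

/-- Replace all columns in `T` by the identity. -/
def colFix (g : Fin d → Fin n → Fin d) (T : Finset (Fin n)) : Fin d → Fin n → Fin d :=
  fun y j => if j ∈ T then y else g y j

lemma colFix_empty (g : Fin d → Fin n → Fin d) : colFix g ∅ = g := by
  funext y j; simp [colFix]

lemma colFix_insert (g : Fin d → Fin n → Fin d) (T : Finset (Fin n)) (j0 : Fin n) :
    colFix g (insert j0 T) = swapAt (colFix g T) j0 := by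
  funext y j
  by_cases h : j = j0 <;> simp [colFix, swapAt, h, Finset.mem_insert]

lemma colFix_univ (g : Fin d → Fin n → Fin d) :
    colFix g univ = fun y _ => y := by
  funext y j; simp [colFix]

lemma N_le_colFix (hd : 0 < d) (g : Fin d → Fin n → Fin d) (T : Finset (Fin n)) :
    N n d g ≤ N n d (colFix g T) := by
  induction T using Finset.induction_on with
  | empty => rw [colFix_empty]
  | insert _ _ hj0 ih =>
      rw [colFix_insert]
      exact le_trans ih (N_le_swapAt hd _ _)

lemma N_eq_colFix (hd : 0 < d) (g : Fin d → Fin n → Fin d) (hP1 : Property1 n d g)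
    (T : Finset (Fin n)) : N n d g = N n d (colFix g T) := by
  induction T using Finset.induction_on with
  | empty => rw [colFix_empty]
  | @insert j0 T hj0 ih =>
      rw [colFix_insert, ← N_eq_swapAt hd _ _ ?_]
      · exact ih
      · have hcol : (fun y => colFix g T y j0) = (fun y => g y j0) :=
          funext fun y => by simp [colFix, hj0]
        rw [hcol]
        exact hP1 j0

lemma N_lt_swapAt (hn : 2 < n) (hd2 : 2 ≤ d) (hpar : 2 < d ∨ Odd n)
    (g : Fin d → Fin n → Fin d) (j0 : Fin n) (hg : ∀ y j, j ≠ j0 → g y j = y)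
    (y1 y2 : Fin d) (h12 : y1 ≠ y2) (hcc : g y1 j0 = g y2 j0) :
    N n d g < N n d (swapAt g j0) := by
  have hd : 0 < d := by omega
  have hcard : Fintype.card {j : Fin n // j ≠ j0} = n - 1 := by
    rw [Fintype.card_subtype]
    rw [show (univ.filter fun j => j ≠ j0) = univ.erase j0 from Finset.filter_ne' univ j0]
    rw [Finset.card_erase_of_mem (Finset.mem_univ _), Finset.card_univ, Fintype.card_fin]
  set m := n - 1 with hm
  set k := m / 2 with hk
  have hm2 : 2 ≤ m := by omega
  have hk1 : 1 ≤ k := by omega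
  have hcardu : (univ : Finset {j : Fin n // j ≠ j0}).card = m := by
    rw [Finset.card_univ, hcard]
  obtain ⟨B, hBu, hBcard⟩ := Finset.exists_subset_card_eq
    (s := (univ : Finset {j : Fin n // j ≠ j0})) (n := k) (by rw [hcardu]; omega)
  obtain ⟨B', hB'u, hB'card⟩ := Finset.exists_subset_card_eq
    (s := univ \ B) (n := k)
    (by rw [Finset.card_sdiff_of_subset (Finset.subset_univ B), hcardu, hBcard]; omega)
  have hdisj : ∀ j', j' ∈ B → j' ∉ B' := fun j' hjB hjB' =>
    (Finset.mem_sdiff.1 (hB'u hjB')).2 hjB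
  obtain ⟨y3, hfresh⟩ : ∃ y3 : Fin d,
      ∀ j' : {j : Fin n // j ≠ j0}, j' ∉ B → j' ∉ B' → y3 ≠ y1 ∧ y3 ≠ y2 := by
    by_cases hpar2 : m % 2 = 0
    · have hBB' : B ∪ B' = univ := by
        apply Finset.eq_univ_of_card
        rw [Finset.card_union_of_disjoint (Finset.disjoint_left.2 hdisj), hBcard, hB'card, hcard]
        omega
      refine ⟨y1, fun j' hjB hjB' => ?_⟩
      exfalso
      have : j' ∈ B ∪ B' := hBB' ▸ Finset.mem_univ j'
      rcases Finset.mem_union.1 this with h | h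
      exacts [hjB h, hjB' h]
    · have hd3 : 2 < d := by
        rcases hpar with h | h
        · exact h
        · exfalso; obtain ⟨t, ht⟩ := h; omega
      have hnon : ((univ : Finset (Fin d)) \ {y1, y2}).Nonempty := by
        rw [← Finset.card_pos, Finset.card_sdiff_of_subset (Finset.subset_univ _)]
        have h2 : ({y1, y2} : Finset (Fin d)).card ≤ 2 := Finset.card_insert_le _ _ |>.trans (by simp)
        rw [Finset.card_univ, Fintype.card_fin]
        omega
      obtain ⟨y3, hy3⟩ := hnon
      have h3 := Finset.mem_sdiff.1 hy3
      simp only [Finset.mem_insert, Finset.mem_singleton, not_or] at h3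
      exact ⟨y3, fun _ _ _ => h3.2⟩
  set x0 : {j : Fin n // j ≠ j0} → Fin d :=
    fun j' => if j' ∈ B then y1 else if j' ∈ B' then y2 else y3 with hx0
  have hcnt : ∀ y : Fin d, Rg g j0 y x0 = (univ.filter fun j' => y = x0 j').card := by
    intro y
    rw [Rg, Finset.card_filter]
    exact Finset.sum_congr rfl fun j' _ => by rw [hg y j'.1 j'.2]
  have hf1 : (univ.filter fun j' => y1 = x0 j') = B := by
    ext j'
    simp only [Finset.mem_filter, Finset.mem_univ, true_and]
    constructor
    · intro hy
      by_contra hjB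
      by_cases hjB' : j' ∈ B'
      · rw [hx0] at hy
        simp only [if_neg hjB, if_pos hjB'] at hy
        exact h12 hy
      · rw [hx0] at hy
        simp only [if_neg hjB, if_neg hjB'] at hy
        exact (hfresh j' hjB hjB').1 hy.symm
    · intro hjB
      rw [hx0]
      simp [hjB]
  have hf2 : (univ.filter fun j' => y2 = x0 j') = B' := by
    ext j'
    simp only [Finset.mem_filter, Finset.mem_univ, true_and]
    constructor
    · intro hy
      by_contra hjB'
      by_cases hjB : j' ∈ B
      · rw [hx0] at hy
        simp only [if_pos hjB] at hy
        exact h12 hy.symm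
      · rw [hx0] at hy
        simp only [if_neg hjB, if_neg hjB'] at hy
        exact (hfresh j' hjB hjB').2 hy.symm
    · intro hjB'
      have hjB : j' ∉ B := fun h => hdisj j' h hjB'
      rw [hx0]
      simp [hjB, hjB']
  have hcle : ∀ y : Fin d, (univ.filter fun j' => y = x0 j').card ≤ k := by
    intro y
    by_cases hy1 : y = y1
    · subst hy1; rw [hf1, hBcard]
    by_cases hy2 : y = y2
    · subst hy2; rw [hf2, hB'card]
    have hsub : (univ.filter fun j' => y = x0 j') ⊆ univ \ (B ∪ B') := by
      intro j' hj'
      have hy := (Finset.mem_filter.1 hj').2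
      rw [Finset.mem_sdiff]
      refine ⟨Finset.mem_univ _, fun hmem => ?_⟩
      rcases Finset.mem_union.1 hmem with hB'' | hB''
      · apply hy1; rw [hy, hx0]; simp [hB'']
      · have hjB : j' ∉ B := fun h => hdisj j' h hB''
        apply hy2; rw [hy, hx0]; simp [hjB, hB'']
    calc (univ.filter fun j' => y = x0 j').card ≤ (univ \ (B ∪ B')).card :=
          Finset.card_le_card hsub
      _ = m - (k + k) := by
          rw [Finset.card_sdiff_of_subset (Finset.subset_univ _),
            Finset.card_union_of_disjoint (Finset.disjoint_left.2 hdisj), hcardu, hBcard, hB'card]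
      _ ≤ k := by omega
  have hsupR : univ.sup (fun y => Rg g j0 y x0) = k := by
    apply le_antisymm
    · exact Finset.sup_le fun y _ => (hcnt y) ▸ hcle y
    · have h1 : Rg g j0 y1 x0 = k := by rw [hcnt, hf1, hBcard]
      exact h1 ▸ Finset.le_sup (f := fun y => Rg g j0 y x0) (Finset.mem_univ y1)
  have hy1A : y1 ∈ univ.filter fun y => Rg g j0 y x0 = univ.sup (fun y => Rg g j0 y x0) := by
    refine Finset.mem_filter.2 ⟨Finset.mem_univ _, ?_⟩
    rw [hsupR, hcnt, hf1, hBcard]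
  have hy2A : y2 ∈ univ.filter fun y => Rg g j0 y x0 = univ.sup (fun y => Rg g j0 y x0) := by
    refine Finset.mem_filter.2 ⟨Finset.mem_univ _, ?_⟩
    rw [hsupR, hcnt, hf2, hB'card]
  rw [N_formula hd g j0, N_swapAt_formula hd g j0]
  apply Finset.sum_lt_sum
  · intro x' _
    exact Nat.add_le_add_left Finset.card_image_le _
  · refine ⟨x0, Finset.mem_univ _, ?_⟩
    set A := univ.filter fun y => Rg g j0 y x0 = univ.sup (fun y => Rg g j0 y x0) with hA
    have hlt : (A.image fun y => g y j0).card < A.card := by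
      have hsub : A.image (fun y => g y j0) ⊆ (A.erase y2).image (fun y => g y j0) := by
        intro a ha
        obtain ⟨y, hyA, rfl⟩ := Finset.mem_image.1 ha
        by_cases hy : y = y2
        · subst hy
          exact Finset.mem_image.2 ⟨y1, Finset.mem_erase.2 ⟨h12, hy1A⟩, hcc⟩
        · exact Finset.mem_image_of_mem _ (Finset.mem_erase.2 ⟨hy, hyA⟩)
      have h1 : (A.image fun y => g y j0).card ≤ (A.erase y2).card :=
        le_trans (Finset.card_le_card hsub) Finset.card_image_le
      have h2 : (A.erase y2).card < A.card := Finset.card_erase_lt_of_mem hy2A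
      omega
    exact Nat.add_lt_add_left hlt _

lemma N_lt_star (hn : 2 < n) (hd2 : 2 ≤ d) (hpar : 2 < d ∨ Odd n)
    (g : Fin d → Fin n → Fin d) (hnP1 : ¬ Property1 n d g) :
    N n d g < N n d (fun y _ => y) := by
  have hd : 0 < d := by omega
  rw [Property1] at hnP1
  push_neg at hnP1
  obtain ⟨j0, hj0⟩ := hnP1
  rw [Function.not_injective_iff] at hj0
  obtain ⟨y1, y2, hcc, h12⟩ := hj0
  have hle := N_le_colFix hd g (univ.erase j0)
  set g' := colFix g (univ.erase j0) with hgdef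
  have hcol : ∀ y j, j ≠ j0 → g' y j = y := fun y j hj => by
    simp [hgdef, colFix, Finset.mem_erase, hj]
  have hcol0 : ∀ y, g' y j0 = g y j0 := fun y => by
    simp [hgdef, colFix]
  have hswap : swapAt g' j0 = fun y _ => y := by
    funext y j
    by_cases hj : j = j0
    · simp [swapAt, hj]
    · simp [swapAt, hj, hcol y j hj]
  have hstep := N_lt_swapAt hn hd2 hpar g' j0 hcol y1 y2 h12
    (by rw [hcol0, hcol0]; exact hcc)
  rw [hswap] at hstep
  omega

lemma Value_eq_N (g : Fin d → Fin n → Fin d) :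
    Value n d g = (N n d g : ℚ) / (n * d ^ n) := by
  rw [Value, N, Nat.cast_sum]

lemma value_le_iff (hn : 0 < n) (hd : 0 < d) (f g : Fin d → Fin n → Fin d) :
    Value n d f ≤ Value n d g ↔ N n d f ≤ N n d g := by
  have hpos : (0 : ℚ) < (n : ℚ) * (d : ℚ) ^ n := by positivity
  rw [Value_eq_N, Value_eq_N, div_le_div_iff_of_pos_right hpos, Nat.cast_le]

end Stmt2

/-- If `n > 2` and either `d > 2` or `n` is odd, a deterministic
strategy is optimal iff it satisfies Property 1. -/
theorem stmt_2 (n d : ℕ) (hn : 2 < n) (hd : 2 ≤ d) (h : 2 < d ∨ Odd n)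
    (g : Fin d → Fin n → Fin d) :
    IsOptimal n d g ↔ Property1 n d g := by
  have hd0 : 0 < d := by omega
  have hn0 : 0 < n := by omega
  constructor
  · intro hopt
    by_contra hP1
    have h1 : Stmt2.N n d g < Stmt2.N n d (fun y _ => y) := Stmt2.N_lt_star hn hd h g hP1
    have h2 := hopt (fun y _ => y)
    rw [Stmt2.value_le_iff hn0 hd0] at h2
    omega
  · intro hP1 f
    have h1 : Stmt2.N n d f ≤ Stmt2.N n d (fun y _ => y) := by
      have := Stmt2.N_le_colFix hd0 f univ
      rwa [Stmt2.colFix_univ] at this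
    have h2 : Stmt2.N n d g = Stmt2.N n d (fun y _ => y) := by
      have := Stmt2.N_eq_colFix hd0 g hP1 univ
      rwa [Stmt2.colFix_univ] at this
    rw [Stmt2.value_le_iff hn0 hd0]
    omega
end

section
/- Let f be a strategy, j : Fin n an index, and a, b : Fin d letters such that (i) there is no y₀ with f y₀ j = a, and (ii) there exist y₁ ≠ y₂ with f y₁ j = f y₂ j = b. Let g be the strategy obtained from f by changing the single entry f y₁ j from b to a (all other entries unchanged). Then Value(g) ≥ Value(f). -/
open Finset

lemma Sim_le_Sim {n d : ℕ} (z z' x x' : Fin n → Fin d)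
    (h : ∀ j', z j' = x j' → z' j' = x' j') : Sim n d z x ≤ Sim n d z' x' := by
  apply Finset.card_le_card
  intro j' hj'
  simp only [Finset.mem_filter, Finset.mem_univ, true_and] at *
  exact h _ hj'

lemma Sim_le_maxSim {n d : ℕ} (g : Fin d → Fin n → Fin d) (x : Fin n → Fin d) (y : Fin d) :
    Sim n d (g y) x ≤ maxSim n d g x := by
  unfold maxSim
  exact Finset.le_sup (f := fun y => Sim n d (g y) x) (Finset.mem_univ y)

lemma maxSim_le {n d : ℕ} (g : Fin d → Fin n → Fin d) (x : Fin n → Fin d) (m : ℕ)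
    (h : ∀ y, Sim n d (g y) x ≤ m) : maxSim n d g x ≤ m := by
  unfold maxSim; exact Finset.sup_le fun y _ => h y

/-- Lemma 1: if letter `a` is missing from column `j` of `f` and
letter `b` appears at least twice there, then changing the single entry
`f y₁ j` from `b` to `a` does not decrease the value. -/
theorem stmt_3 (n d : ℕ) (hn : 1 ≤ n) (hd : 2 ≤ d)
    (f : Fin d → Fin n → Fin d) (j : Fin n) (a b : Fin d)
    (ha : ∀ y₀ : Fin d, f y₀ j ≠ a)
    (y₁ y₂ : Fin d) (hy : y₁ ≠ y₂) (hb₁ : f y₁ j = b) (hb₂ : f y₂ j = b)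
    (g : Fin d → Fin n → Fin d)
    (hg : g = fun y j' => if y = y₁ ∧ j' = j then a else f y j') :
    Value n d f ≤ Value n d g := by
  have hab : a ≠ b := fun h => ha y₁ (hb₁.trans h.symm)
  have hgapp : ∀ y j', g y j' = if y = y₁ ∧ j' = j then a else f y j' := by
    intro y j'; rw [hg]
  -- the involution swapping a and b at position j
  set τ : (Fin n → Fin d) → (Fin n → Fin d) :=
    fun x => Function.update x j (Equiv.swap a b (x j)) with hτ
  have hτj : ∀ x, τ x j = Equiv.swap a b (x j) := by
    intro x; simp [hτ]
  have hτne : ∀ (x : Fin n → Fin d) (j' : Fin n), j' ≠ j → τ x j' = x j' := by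
    intro x j' hj'; simp [hτ, Function.update_of_ne hj']
  have hτ_inv : Function.Involutive τ := by
    intro x; funext j'
    by_cases h : j' = j
    · subst h; rw [hτj, hτj x, Equiv.swap_apply_self]
    · rw [hτne _ _ h, hτne _ _ h]
  -- main inequality for x with x j = a
  have keyA : ∀ x : Fin n → Fin d, x j = a →
      maxSim n d f x + maxSim n d f (τ x) ≤ maxSim n d g x + maxSim n d g (τ x) := by
    intro x hxa
    have h1 : maxSim n d f x ≤ maxSim n d g x := by
      apply maxSim_le; intro y
      refine le_trans (Sim_le_Sim _ _ _ _ ?_) (Sim_le_maxSim g x y)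
      intro j' hj'
      by_cases h : j' = j
      · subst h; rw [hxa] at hj'; exact absurd hj' (ha y)
      · rw [hgapp]; simp [h, hj']
    have h2 : maxSim n d f x ≤ maxSim n d g (τ x) := by
      apply maxSim_le; intro y
      refine le_trans (Sim_le_Sim _ _ _ _ ?_) (Sim_le_maxSim g (τ x) y)
      intro j' hj'
      by_cases h : j' = j
      · subst h; rw [hxa] at hj'; exact absurd hj' (ha y)
      · rw [hgapp, hτne _ _ h]; simp [h, hj']
    have h3 : maxSim n d f (τ x) ≤ max (maxSim n d g x) (maxSim n d g (τ x)) := by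
      apply maxSim_le; intro y
      by_cases hy1 : y = y₁
      · refine le_trans (le_trans (Sim_le_Sim (f y) (g y) (τ x) x ?_)
          (Sim_le_maxSim g x y)) (le_max_left _ _)
        intro j' hj'
        by_cases h : j' = j
        · subst h; rw [hgapp]; simp [hy1, hxa]
        · rw [hgapp]; simp [h]
          rw [hτne _ _ h] at hj'; exact hj'
      · refine le_trans (le_trans (Sim_le_Sim (f y) (g y) (τ x) (τ x) ?_)
          (Sim_le_maxSim g (τ x) y)) (le_max_right _ _)
        intro j' hj'
        rw [hgapp]; simp [hy1, hj']
    rcases le_max_iff.mp h3 with h | h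
    · omega
    · omega
  -- main inequality for all x
  have key : ∀ x : Fin n → Fin d,
      maxSim n d f x + maxSim n d f (τ x) ≤ maxSim n d g x + maxSim n d g (τ x) := by
    intro x
    by_cases hxa : x j = a
    · exact keyA x hxa
    by_cases hxb : x j = b
    · have hta : τ x j = a := by rw [hτj, hxb, Equiv.swap_apply_right]
      have := keyA (τ x) hta
      rw [hτ_inv x] at this
      omega
    · have hτx : τ x = x := by
        funext j'
        by_cases h : j' = j
        · subst h; rw [hτj, Equiv.swap_apply_of_ne_of_ne hxa hxb]
        · exact hτne _ _ h
      rw [hτx]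
      have h1 : maxSim n d f x ≤ maxSim n d g x := by
        apply maxSim_le; intro y
        refine le_trans (Sim_le_Sim _ _ _ _ ?_) (Sim_le_maxSim g x y)
        intro j' hj'
        rw [hgapp]
        by_cases h : y = y₁ ∧ j' = j
        · obtain ⟨h1', h2'⟩ := h
          subst h2'; rw [h1', hb₁] at hj'
          exact absurd hj'.symm hxb
        · simp [h, hj']
      omega
  -- summation
  have hsum : ∑ x : Fin n → Fin d, maxSim n d f x ≤ ∑ x : Fin n → Fin d, maxSim n d g x := by
    have h2 : ∑ x : Fin n → Fin d, (maxSim n d f x + maxSim n d f (τ x)) ≤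
        ∑ x : Fin n → Fin d, (maxSim n d g x + maxSim n d g (τ x)) :=
      Finset.sum_le_sum fun x _ => key x
    rw [Finset.sum_add_distrib, Finset.sum_add_distrib] at h2
    have hf' : ∑ x : Fin n → Fin d, maxSim n d f (τ x) = ∑ x : Fin n → Fin d, maxSim n d f x :=
      Equiv.sum_comp hτ_inv.toPerm (fun x => maxSim n d f x)
    have hg' : ∑ x : Fin n → Fin d, maxSim n d g (τ x) = ∑ x : Fin n → Fin d, maxSim n d g x :=
      Equiv.sum_comp hτ_inv.toPerm (fun x => maxSim n d g x)
    rw [hf', hg'] at h2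
    omega
  unfold Value
  have hden : (0 : ℚ) < (n : ℚ) * (d : ℚ) ^ n := by
    have hn' : (0 : ℚ) < (n : ℚ) := by exact_mod_cast hn
    have hd' : (0 : ℚ) < (d : ℚ) ^ n := by positivity
    exact mul_pos hn' hd'
  apply div_le_div_of_nonneg_right ?_ hden.le
  exact_mod_cast hsum
end

section
/- All strategies satisfying Property 1 have the same value: if g satisfies Property 1 (for every index j : Fin n the map y ↦ g y j is injective), then Value(g) = Value(g_maj), where g_maj is the majority strategy defined by g_maj y j = y. -/
open Finset

/-- Lemma 2: all strategies satisfying Property 1 have the same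
value, namely the value of the majority strategy `g_maj y j = y`. -/
theorem stmt_5 (n d : ℕ) (hn : 1 ≤ n) (hd : 2 ≤ d)
    (g : Fin d → Fin n → Fin d) (hp : Property1 n d g) :
    Value n d g = Value n d (fun y _ => y) := by
  have hb : ∀ j, Function.Bijective (fun y => g y j) := fun j =>
    (Finite.injective_iff_bijective).mp (hp j)
  let e : Fin n → Fin d ≃ Fin d := fun j => Equiv.ofBijective _ (hb j)
  have key : ∀ x : Fin n → Fin d,
      maxSim n d g x = maxSim n d (fun y _ => y) (fun j => (e j).symm (x j)) := by
    intro x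
    unfold maxSim
    congr 1
    funext y
    unfold Sim
    congr 1
    apply Finset.filter_congr
    intro j _
    simp only [eq_iff_iff]
    constructor
    · intro h
      exact ((e j).symm_apply_eq.mpr h.symm).symm
    · intro h
      exact ((e j).symm_apply_eq.mp h.symm).symm
  unfold Value
  congr 1
  have : (∑ x : Fin n → Fin d, (maxSim n d g x : ℚ))
      = ∑ x : Fin n → Fin d, (maxSim n d (fun y _ => y) (fun j => (e j).symm (x j)) : ℚ) := by
    apply Finset.sum_congr rfl
    intro x _
    rw [key x]
  rw [this]
  exact Fintype.sum_equiv (Equiv.piCongrRight fun j => (e j).symm) _ _ fun x => rfl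
end

section
/- Suppose n > 2 and either d > 2 or n is odd. Let g be a strategy satisfying Property 1, let j : Fin n be an index and y₁ ≠ y₂ be two messages. Let f be the strategy obtained from g by changing the single entry g y₁ j to the value g y₂ j (all other entries unchanged). Then Value(f) < Value(g). -/
open Finset

lemma card_filter_erase {α : Type*} [Fintype α] [DecidableEq α] (p : α → Prop)
    [DecidablePred p] (j : α) :
    (univ.filter p).card = ((univ.erase j).filter p).card + if p j then 1 else 0 := by
  have h : (univ : Finset α) = insert j (univ.erase j) := (Finset.insert_erase (mem_univ j)).symm
  conv_lhs => rw [h, Finset.filter_insert]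
  by_cases hp : p j
  · rw [if_pos hp, if_pos hp, Finset.card_insert_of_notMem (by simp)]
  · rw [if_neg hp, if_neg hp, add_zero]

lemma sim_eq (n d : ℕ) (z x : Fin n → Fin d) (j : Fin n) :
    Sim n d z x = (((univ.erase j)).filter fun k => z k = x k).card
      + if z j = x j then 1 else 0 :=
  card_filter_erase _ j

lemma maxSim_split (n d : ℕ) (g : Fin d → Fin n → Fin d) (x : Fin n → Fin d) (y₁ : Fin d) :
    maxSim n d g x = max (Sim n d (g y₁) x)
      ((univ.erase y₁).sup fun y => Sim n d (g y) x) := by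
  unfold maxSim
  conv_lhs => rw [← Finset.insert_erase (Finset.mem_univ y₁), Finset.sup_insert]


lemma max_ineq (S Mx Mv : ℕ) (h : Mv ≤ Mx) :
    max (S + 1) Mx + max S Mv ≤ max S Mx + max (S + 1) Mv := by omega

/-- Lemma 3: for `n > 2` with `d > 2` or `n` odd, any strategy
with Property 1 strictly suffers from overwriting the entry `g y₁ j` with the
value `g y₂ j`. -/
theorem stmt_6 (n d : ℕ) (hn : 2 < n) (hd : 2 ≤ d) (h : 2 < d ∨ Odd n)
    (g : Fin d → Fin n → Fin d) (hp : Property1 n d g)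
    (j : Fin n) (y₁ y₂ : Fin d) (hy : y₁ ≠ y₂)
    (f : Fin d → Fin n → Fin d)
    (hf : f = fun y j' => if y = y₁ ∧ j' = j then g y₂ j else g y j') :
    Value n d f < Value n d g := by
  have hfrow : ∀ y, y ≠ y₁ → f y = g y := by
    intro y hy'; funext k; rw [hf]; simp [hy']
  have hfy₁j : f y₁ j = g y₂ j := by rw [hf]; simp
  have hfy₁k : ∀ k, k ≠ j → f y₁ k = g y₁ k := by
    intro k hk; rw [hf]; simp [hk]
  have hba : g y₁ j ≠ g y₂ j := fun hh => hy (hp j hh)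
  set a := g y₂ j with ha
  set b := g y₁ j with hb
  set M : (Fin n → Fin d) → ℕ :=
    fun x => (univ.erase y₁).sup fun y => Sim n d (g y) x with hM
  have hMg : ∀ x, maxSim n d g x = max (Sim n d (g y₁) x) (M x) :=
    fun x => maxSim_split n d g x y₁
  have hMf : ∀ x, maxSim n d f x = max (Sim n d (f y₁) x) (M x) := by
    intro x
    rw [maxSim_split n d f x y₁]
    congr 1
    apply Finset.sup_congr rfl
    intro y hy'
    rw [hfrow y (Finset.mem_erase.1 hy').1]
  -- main pair analysis
  have pairs : ∀ x : Fin n → Fin d, x j = a →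
      maxSim n d g x = max (Sim n d (g y₁) x) (M x) ∧
      maxSim n d g (Function.update x j b)
        = max (Sim n d (g y₁) x + 1) (M (Function.update x j b)) ∧
      maxSim n d f x = max (Sim n d (g y₁) x + 1) (M x) ∧
      maxSim n d f (Function.update x j b)
        = max (Sim n d (g y₁) x) (M (Function.update x j b)) ∧
      M (Function.update x j b) ≤ M x := by
    intro x hx
    set v := Function.update x j b with hv
    set E := (((univ.erase j)).filter fun k => g y₁ k = x k).card with hE
    have hvk : ∀ k, k ≠ j → v k = x k := fun k hk => Function.update_of_ne hk _ _
    have hvj : v j = b := Function.update_self _ _ _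
    have e1 : Sim n d (g y₁) x = E := by
      rw [sim_eq n d _ x j, hx, if_neg hba, add_zero]
    have efilter : ∀ z : Fin n → Fin d,
        ((univ.erase j).filter fun k => z k = v k)
          = ((univ.erase j).filter fun k => z k = x k) := by
      intro z
      apply Finset.filter_congr
      intro k hk
      rw [hvk k (Finset.mem_erase.1 hk).1]
    have e2 : Sim n d (g y₁) v = E + 1 := by
      rw [sim_eq n d _ v j, efilter, hvj, if_pos rfl]
    have e3 : Sim n d (f y₁) x = E + 1 := by
      rw [sim_eq n d _ x j]
      have hfe : ((univ.erase j).filter fun k => f y₁ k = x k)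
          = ((univ.erase j).filter fun k => g y₁ k = x k) := by
        apply Finset.filter_congr
        intro k hk
        rw [hfy₁k k (Finset.mem_erase.1 hk).1]
      rw [hfe, hfy₁j, hx, if_pos rfl]
    have e4 : Sim n d (f y₁) v = E := by
      rw [sim_eq n d _ v j]
      have hfe : ((univ.erase j).filter fun k => f y₁ k = v k)
          = ((univ.erase j).filter fun k => g y₁ k = x k) := by
        apply Finset.filter_congr
        intro k hk
        have hk' := (Finset.mem_erase.1 hk).1
        rw [hfy₁k k hk', hvk k hk']
      rw [hfe, hfy₁j, hvj, if_neg (Ne.symm hba), add_zero]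
    have e5 : ∀ y, y ≠ y₁ → Sim n d (g y) v ≤ Sim n d (g y) x := by
      intro y hy'
      rw [sim_eq n d _ v j, sim_eq n d _ x j, efilter, hvj]
      have hgy : g y j ≠ b := fun hh => hy' (hp j hh)
      rw [if_neg hgy, add_zero]
      exact Nat.le_add_right _ _
    have hMle : M v ≤ M x := by
      simp only [hM]
      apply Finset.sup_le
      intro y hy'
      exact le_trans (e5 y (Finset.mem_erase.1 hy').1)
        (Finset.le_sup (f := fun y => Sim n d (g y) x) hy')
    exact ⟨hMg x, by rw [hMg v, e2, ← e1], by rw [hMf x, e3, ← e1],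
      by rw [hMf v, e4, ← e1], hMle⟩
  -- construction of the strict witness
  set m := (n - 1) / 2 with hm
  have hcard : (univ.erase j).card = n - 1 := by
    rw [Finset.card_erase_of_mem (mem_univ j), Finset.card_univ, Fintype.card_fin]
  obtain ⟨S₁, hS₁sub, hS₁card⟩ :=
    Finset.exists_subset_card_eq (s := univ.erase j) (n := m) (by omega)
  obtain ⟨S₂, hS₂sub, hS₂card⟩ :=
    Finset.exists_subset_card_eq (s := (univ.erase j) \ S₁) (n := m)
      (by rw [Finset.card_sdiff_of_subset hS₁sub, hS₁card, hcard]; omega)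
  have hS₂e : S₂ ⊆ univ.erase j := hS₂sub.trans Finset.sdiff_subset
  have hdis : ∀ k, k ∈ S₂ → k ∉ S₁ := fun k hk => (Finset.mem_sdiff.1 (hS₂sub hk)).2
  have hjS₂ : j ∉ S₂ := fun hh => (Finset.mem_erase.1 (hS₂e hh)).1 rfl
  set R := ((univ.erase j) \ S₁) \ S₂ with hR
  have hRcard : R.card = n - 1 - m - m := by
    rw [hR, Finset.card_sdiff_of_subset hS₂sub, Finset.card_sdiff_of_subset hS₁sub, hS₁card, hS₂card, hcard]
  obtain ⟨y₃, hy₃1, hy₃R⟩ : ∃ y₃ : Fin d, y₃ ≠ y₁ ∧ (y₃ = y₂ → R = ∅) := by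
    rcases h with hd3 | hodd
    · have hne : (univ \ ({y₁, y₂} : Finset (Fin d))).Nonempty := by
        rw [← Finset.card_pos, Finset.card_sdiff_of_subset (Finset.subset_univ _), Finset.card_univ,
          Fintype.card_fin]
        have : ({y₁, y₂} : Finset (Fin d)).card ≤ 2 := Finset.card_insert_le _ _ |>.trans (by simp)
        omega
      obtain ⟨y₃, hy₃⟩ := hne
      rw [Finset.mem_sdiff, Finset.mem_insert, Finset.mem_singleton] at hy₃
      push_neg at hy₃
      exact ⟨y₃, hy₃.2.1, fun hh => absurd hh hy₃.2.2⟩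
    · refine ⟨y₂, Ne.symm hy, fun _ => Finset.card_eq_zero.1 ?_⟩
      rw [hRcard]
      obtain ⟨t, ht⟩ := hodd
      omega
  set vote : Fin n → Fin d :=
    fun k => if k = j then y₂ else if k ∈ S₁ then y₁ else if k ∈ S₂ then y₂ else y₃ with hvote
  have hvj' : vote j = y₂ := by simp [hvote]
  have hvS₁ : ∀ k, k ≠ j → k ∈ S₁ → vote k = y₁ := by
    intro k h1 h2; simp [hvote, h1, h2]
  have hvS₂ : ∀ k, k ≠ j → k ∉ S₁ → k ∈ S₂ → vote k = y₂ := by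
    intro k h1 h2 h3; simp [hvote, h1, h2, h3]
  have hvR : ∀ k, k ≠ j → k ∉ S₁ → k ∉ S₂ → vote k = y₃ := by
    intro k h1 h2 h3; simp [hvote, h1, h2, h3]
  set u : Fin n → Fin d := fun k => g (vote k) k with hu
  have huj : u j = a := by
    simp only [hu]
    rw [hvj']
  have hsimu : ∀ y, Sim n d (g y) u = (univ.filter fun k => vote k = y).card := by
    intro y
    unfold Sim
    congr 1
    apply Finset.filter_congr
    intro k _
    simp only [hu]
    constructor
    · intro hh; exact (hp k hh).symm
    · intro hh; rw [hh]
  have hsimu' : ∀ y, ((univ.erase j).filter fun k => g y k = u k).card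
      = ((univ.erase j).filter fun k => vote k = y).card := by
    intro y
    congr 1
    apply Finset.filter_congr
    intro k _
    simp only [hu]
    constructor
    · intro hh; exact (hp k hh).symm
    · intro hh; rw [hh]
  have hfilS₁ : ((univ.erase j).filter fun k => vote k = y₁) = S₁ := by
    ext k
    constructor
    · intro hk
      obtain ⟨hk1, hk2⟩ := Finset.mem_filter.1 hk
      have hkj : k ≠ j := (Finset.mem_erase.1 hk1).1
      by_cases h1 : k ∈ S₁
      · exact h1
      · exfalso
        by_cases h2 : k ∈ S₂
        · rw [hvS₂ k hkj h1 h2] at hk2; exact hy hk2.symm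
        · rw [hvR k hkj h1 h2] at hk2; exact hy₃1 hk2
    · intro hk
      have hkj : k ≠ j := (Finset.mem_erase.1 (hS₁sub hk)).1
      exact Finset.mem_filter.2 ⟨hS₁sub hk, hvS₁ k hkj hk⟩
  have hsimy₁u : Sim n d (g y₁) u = m := by
    rw [sim_eq n d _ u j, hsimu' y₁, hfilS₁, hS₁card]
    have : g y₁ j ≠ u j := by rw [huj]; exact hba
    rw [if_neg this, add_zero]
  have hcnt : ∀ y, y ≠ y₁ → ((univ.erase j).filter fun k => vote k = y).card ≤ m := by
    intro y hyy
    have hsub : ((univ.erase j).filter fun k => vote k = y)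
        ⊆ ((if y = y₂ then S₂ else ∅) ∪ (if y = y₃ then R else ∅)) := by
      intro k hk
      obtain ⟨hk1, hk2⟩ := Finset.mem_filter.1 hk
      have hkj : k ≠ j := (Finset.mem_erase.1 hk1).1
      rw [Finset.mem_union]
      by_cases h1 : k ∈ S₁
      · rw [hvS₁ k hkj h1] at hk2; exact absurd hk2.symm hyy
      · by_cases h2 : k ∈ S₂
        · rw [hvS₂ k hkj h1 h2] at hk2
          left
          rw [if_pos hk2.symm]
          exact h2
        · rw [hvR k hkj h1 h2] at hk2
          right
          rw [if_pos hk2.symm, hR]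
          simp only [Finset.mem_sdiff]
          exact ⟨⟨hk1, h1⟩, h2⟩
    refine le_trans (Finset.card_le_card hsub) (le_trans (Finset.card_union_le _ _) ?_)
    split_ifs with hA hB hB
    · have hRe : R = ∅ := hy₃R (by rw [← hB, hA])
      simp [hRe, hS₂card]
    · simp [hS₂card]
    · simp only [Finset.card_empty, zero_add]
      omega
    · simp
  have hy₂e : y₂ ∈ univ.erase y₁ := Finset.mem_erase.2 ⟨Ne.symm hy, Finset.mem_univ _⟩
  have hMu : m + 1 ≤ M u := by
    have hins : insert j S₂ ⊆ univ.filter fun k => vote k = y₂ := by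
      intro k hk
      rcases Finset.mem_insert.1 hk with hk | hk
      · subst hk
        exact Finset.mem_filter.2 ⟨Finset.mem_univ _, hvj'⟩
      · have hkj : k ≠ j := (Finset.mem_erase.1 (hS₂e hk)).1
        exact Finset.mem_filter.2 ⟨Finset.mem_univ _, hvS₂ k hkj (hdis k hk) hk⟩
    have h1 : m + 1 ≤ Sim n d (g y₂) u := by
      rw [hsimu y₂]
      calc m + 1 = (insert j S₂).card := by
            rw [Finset.card_insert_of_notMem hjS₂, hS₂card]
        _ ≤ _ := Finset.card_le_card hins
    exact le_trans h1 (Finset.le_sup (f := fun y => Sim n d (g y) u) hy₂e)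
  set v := Function.update u j b with hv
  have hMv : M v ≤ m := by
    simp only [hM]
    apply Finset.sup_le
    intro y hy'
    have hyy := (Finset.mem_erase.1 hy').1
    rw [sim_eq n d _ v j]
    have hgy : g y j ≠ v j := by
      rw [hv, Function.update_self]
      exact fun hh => hyy (hp j hh)
    rw [if_neg hgy, add_zero]
    have hfe : ((univ.erase j).filter fun k => g y k = v k)
        = ((univ.erase j).filter fun k => g y k = u k) := by
      apply Finset.filter_congr
      intro k hk
      rw [hv, Function.update_of_ne (Finset.mem_erase.1 hk).1]
    rw [hfe, hsimu' y]
    exact hcnt y hyy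
  have strict : maxSim n d f u + maxSim n d f v < maxSim n d g u + maxSim n d g v := by
    obtain ⟨p1, p2, p3, p4, _⟩ := pairs u huj
    rw [p1, p2, p3, p4, hsimy₁u, ← hv]
    omega
  -- the columns outside {a,b} don't change
  have hC : ∀ x : Fin n → Fin d, ¬ x j = a → ¬ x j = b → maxSim n d f x = maxSim n d g x := by
    intro x h1 h2
    rw [hMf, hMg]
    congr 1
    rw [sim_eq n d _ x j, sim_eq n d _ x j]
    have hfe : ((univ.erase j).filter fun k => f y₁ k = x k)
        = ((univ.erase j).filter fun k => g y₁ k = x k) := by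
      apply Finset.filter_congr
      intro k hk
      rw [hfy₁k k (Finset.mem_erase.1 hk).1]
    rw [hfe, hfy₁j]
    rw [if_neg (fun hh => h1 hh.symm), if_neg (fun hh : b = x j => h2 hh.symm)]
  have hsplit : ∀ H : (Fin n → Fin d) → ℕ,
      ∑ x : Fin n → Fin d, H x
        = (∑ x ∈ univ.filter (fun x : Fin n → Fin d => x j = a),
            (H x + H (Function.update x j b)))
          + ∑ x ∈ univ.filter (fun x : Fin n → Fin d => ¬ x j = a ∧ ¬ x j = b), H x := by
    intro H
    rw [Finset.sum_add_distrib]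
    have hAB : ∑ x ∈ univ.filter (fun x : Fin n → Fin d => x j = a), H (Function.update x j b)
        = ∑ x ∈ univ.filter (fun x : Fin n → Fin d => x j = b), H x := by
      apply Finset.sum_nbij' (i := fun x => Function.update x j b)
        (j := fun x => Function.update x j a)
      · intro x _
        exact Finset.mem_filter.2 ⟨Finset.mem_univ _, Function.update_self _ _ _⟩
      · intro x _
        exact Finset.mem_filter.2 ⟨Finset.mem_univ _, Function.update_self _ _ _⟩
      · intro x hx
        have hx' : x j = a := (Finset.mem_filter.1 hx).2
        rw [Function.update_idem, ← hx', Function.update_eq_self]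
      · intro x hx
        have hx' : x j = b := (Finset.mem_filter.1 hx).2
        rw [Function.update_idem, ← hx', Function.update_eq_self]
      · intro x _
        rfl
    rw [hAB]
    have h1 := Finset.sum_filter_add_sum_filter_not (univ : Finset (Fin n → Fin d))
      (fun x => x j = a) H
    have h2 := Finset.sum_filter_add_sum_filter_not
      (univ.filter (fun x : Fin n → Fin d => ¬ x j = a)) (fun x => x j = b) H
    rw [Finset.filter_filter, Finset.filter_filter] at h2
    have e1 : univ.filter (fun x : Fin n → Fin d => ¬ x j = a ∧ x j = b)
        = univ.filter (fun x : Fin n → Fin d => x j = b) := by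
      apply Finset.filter_congr
      intro x _
      constructor
      · exact And.right
      · intro hh
        exact ⟨fun hh' => hba (hh.symm.trans hh'), hh⟩
    rw [e1] at h2
    rw [add_assoc, h2]
    exact h1.symm
  have key : ∑ x : Fin n → Fin d, maxSim n d f x < ∑ x : Fin n → Fin d, maxSim n d g x := by
    rw [hsplit (maxSim n d f), hsplit (maxSim n d g)]
    have hCeq : ∑ x ∈ univ.filter (fun x : Fin n → Fin d => ¬ x j = a ∧ ¬ x j = b),
          maxSim n d f x
        = ∑ x ∈ univ.filter (fun x : Fin n → Fin d => ¬ x j = a ∧ ¬ x j = b),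
          maxSim n d g x :=
      Finset.sum_congr rfl fun x hx => by
        obtain ⟨-, h1, h2⟩ := Finset.mem_filter.1 hx
        exact hC x h1 h2
    rw [hCeq]
    apply Nat.add_lt_add_right
    apply Finset.sum_lt_sum
    · intro x hx
      obtain ⟨p1, p2, p3, p4, p5⟩ := pairs x (Finset.mem_filter.1 hx).2
      rw [p1, p2, p3, p4]
      exact max_ineq _ _ _ p5
    · refine ⟨u, Finset.mem_filter.2 ⟨Finset.mem_univ _, huj⟩, ?_⟩
      rw [← hv]
      exact strict
  have hD : (0:ℚ) < (n : ℚ) * (d : ℚ) ^ n := by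
    have h1 : (0:ℚ) < (n:ℚ) := by exact_mod_cast (by omega : 0 < n)
    have h2 : (0:ℚ) < (d:ℚ) := by exact_mod_cast (by omega : 0 < d)
    exact mul_pos h1 (pow_pos h2 n)
  unfold Value
  rw [div_lt_div_iff_of_pos_right hD]
  exact_mod_cast key
end

section
/- Let d = 2 and let n > 2 be even. Then every strategy g satisfying Property 2 is optimal, and moreover for every strategy f not satisfying Property 2 and every strategy g satisfying Property 2 one has Value(f) < Value(g). -/
open Finset

/-! ### Auxiliary definitions and lemmas -/

/-- Number of positions where `w` agrees with the reference word `c`. -/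
def Zc {α : Type*} [Fintype α] (c w : α → Fin 2) : ℕ := ∑ a, if c a = w a then 1 else 0

/-- `Tm m = ∑ over words v of length m of max(#zeros v, m - #zeros v)`. -/
def Tm (m : ℕ) : ℕ := ∑ v : Fin m → Fin 2, max (Zc 0 v) (m - Zc 0 v)

/-- Number of balanced words of length `m`. -/
def Em (m : ℕ) : ℕ := ∑ v : Fin m → Fin 2, if 2 * Zc 0 v = m then 1 else 0

/-- Twice the total score of a strategy whose "equal columns" count is `k`. -/
def Vk (n k : ℕ) : ℕ := k * 2 ^ n + 2 ^ (k + 1) * Tm (n - k)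

lemma Zc_le {α : Type*} [Fintype α] (c w : α → Fin 2) : Zc c w ≤ Fintype.card α := by
  classical
  calc Zc c w ≤ ∑ _a : α, 1 := Finset.sum_le_sum (fun a _ => by split <;> omega)
  _ = Fintype.card α := by simp

lemma two_mul_sum_Zc {α : Type*} [Fintype α] [DecidableEq α] (c : α → Fin 2) :
    2 * ∑ w : α → Fin 2, Zc c w = Fintype.card α * 2 ^ Fintype.card α := by
  classical
  have h11 : ∀ y : Fin 2, y + 1 + 1 = y := by decide
  have key : ∀ y z : Fin 2, ((if z = y then 1 else 0) + (if z = y + 1 then 1 else 0) : ℕ) = 1 := by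
    decide
  let e : (α → Fin 2) ≃ (α → Fin 2) :=
    ⟨fun w a => w a + 1, fun w a => w a + 1,
      fun w => funext fun a => h11 (w a), fun w => funext fun a => h11 (w a)⟩
  have h1 : ∑ w : α → Fin 2, Zc c w
      = ∑ w : α → Fin 2, ∑ a : α, (if c a = w a + 1 then 1 else 0) := by
    rw [← Equiv.sum_comp e (fun w => Zc c w)]
    exact Fintype.sum_congr _ _ fun w => rfl
  calc 2 * ∑ w : α → Fin 2, Zc c w
      = ∑ w : α → Fin 2, (Zc c w + ∑ a : α, (if c a = w a + 1 then 1 else 0)) := by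
        rw [Finset.sum_add_distrib, ← h1]; ring
    _ = ∑ _w : α → Fin 2, ∑ _a : α, 1 := by
        refine Fintype.sum_congr _ _ (fun w => ?_)
        rw [Zc, ← Finset.sum_add_distrib]
        exact Fintype.sum_congr _ _ fun a => key (w a) (c a)
    _ = Fintype.card α * 2 ^ Fintype.card α := by
        simp [Finset.sum_const, Fintype.card_fun, mul_comm]

lemma Tsum_eq {α : Type*} [Fintype α] [DecidableEq α] (c : α → Fin 2) :
    ∑ v : α → Fin 2, max (Zc c v) (Fintype.card α - Zc c v) = Tm (Fintype.card α) := by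
  classical
  have h22 : ∀ y z : Fin 2, y + z + z = y := by decide
  let ψ : (α → Fin 2) ≃ (α → Fin 2) :=
    ⟨fun v a => v a + c a, fun v a => v a + c a,
      fun v => funext fun a => h22 (v a) (c a), fun v => funext fun a => h22 (v a) (c a)⟩
  have hzc : ∀ v : α → Fin 2, Zc c (ψ v) = Zc 0 v := by
    intro v
    refine Fintype.sum_congr _ _ fun a => ?_
    have : ∀ y z : Fin 2, ((if z = y + z then 1 else 0 : ℕ) = if (0 : Fin 2) = y then 1 else 0) := by
      decide
    exact this (v a) (c a)
  have h1 : ∑ v : α → Fin 2, max (Zc c v) (Fintype.card α - Zc c v)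
      = ∑ v : α → Fin 2, max (Zc 0 v) (Fintype.card α - Zc 0 v) := by
    rw [← Equiv.sum_comp ψ (fun v => max (Zc c v) (Fintype.card α - Zc c v))]
    exact Fintype.sum_congr _ _ fun v => by rw [hzc]
  rw [h1]
  let e := Fintype.equivFin α
  let φ : (Fin (Fintype.card α) → Fin 2) ≃ (α → Fin 2) :=
    Equiv.arrowCongr e.symm (Equiv.refl (Fin 2))
  rw [← Equiv.sum_comp φ (fun v => max (Zc 0 v) (Fintype.card α - Zc 0 v))]
  refine Fintype.sum_congr _ _ fun u => ?_
  have : Zc 0 (φ u) = Zc 0 u :=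
    calc Zc 0 (φ u) = ∑ a : α, (if (0 : Fin 2) = u (e a) then 1 else 0) :=
          Fintype.sum_congr _ _ fun a => by simp [φ, Equiv.arrowCongr]
    _ = Zc 0 u := Equiv.sum_comp e (fun i => if (0 : Fin 2) = u i then 1 else 0)
  rw [this]

lemma Tm_succ (m : ℕ) : Tm (m + 1) = 2 * Tm m + 2 ^ m + Em m := by
  classical
  let e := Fin.consEquiv (fun _ : Fin (m + 1) => Fin 2)
  have hz : ∀ (y : Fin 2) (w : Fin m → Fin 2),
      Zc 0 (Fin.cons y w) = (if (0 : Fin 2) = y then 1 else 0) + Zc 0 w := by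
    intro y w
    rw [Zc, Fin.sum_univ_succ]
    simp [Zc]
  rw [Tm, ← Equiv.sum_comp e (fun v => max (Zc 0 v) (m + 1 - Zc 0 v)), Fintype.sum_prod_type,
    Fin.sum_univ_two]
  have key : ∀ w : Fin m → Fin 2,
      (max (Zc 0 (e (0, w))) (m + 1 - Zc 0 (e (0, w)))
        + max (Zc 0 (e (1, w))) (m + 1 - Zc 0 (e (1, w))))
      = 2 * max (Zc 0 w) (m - Zc 0 w) + 1 + (if 2 * Zc 0 w = m then 1 else 0) := by
    intro w
    have hb : Zc 0 w ≤ m := by simpa using Zc_le 0 w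
    have h0 : Zc 0 (e (0, w)) = 1 + Zc 0 w := by
      show Zc 0 (Fin.cons 0 w) = _; rw [hz]; norm_num
    have h1 : Zc 0 (e (1, w)) = Zc 0 w := by
      show Zc 0 (Fin.cons 1 w) = _; rw [hz]; norm_num
    rw [h0, h1]
    simp only [Nat.max_def]
    split_ifs <;> omega
  rw [← Finset.sum_add_distrib]
  calc ∑ w : Fin m → Fin 2, (max (Zc 0 (e (0, w))) (m + 1 - Zc 0 (e (0, w)))
        + max (Zc 0 (e (1, w))) (m + 1 - Zc 0 (e (1, w))))
      = ∑ w : Fin m → Fin 2,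
          (2 * max (Zc 0 w) (m - Zc 0 w) + 1 + (if 2 * Zc 0 w = m then 1 else 0)) :=
        Fintype.sum_congr _ _ key
    _ = 2 * Tm m + 2 ^ m + Em m := by
        rw [Finset.sum_add_distrib, Finset.sum_add_distrib, ← Finset.mul_sum]
        simp [Tm, Em, Fintype.card_fun]

lemma Em_odd {m : ℕ} (hm : ¬ Even m) : Em m = 0 := by
  rw [Em]
  refine Finset.sum_eq_zero fun v _ => ?_
  rw [if_neg]
  intro h
  exact hm ⟨Zc 0 v, by omega⟩

lemma Em_pos {m : ℕ} (hm : Even m) : 0 < Em m := by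
  obtain ⟨c, hc⟩ := hm
  set v : Fin m → Fin 2 := fun i => if (i : ℕ) < c then 0 else 1 with hv
  have hzv : Zc 0 v = c := by
    have : ∀ i : Fin m, (if (0 : Fin 2) = v i then 1 else 0) = if (i : ℕ) < c then 1 else 0 := by
      intro i
      by_cases h : (i : ℕ) < c <;> simp [hv, h]
    rw [Zc]
    simp only [Pi.zero_apply]
    rw [Fintype.sum_congr _ _ this, Fin.sum_univ_eq_sum_range (fun i => if i < c then 1 else 0),
      ← Finset.sum_filter]
    have : (Finset.range m).filter (fun i => i < c) = Finset.range c := by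
      ext i; simp; omega
    simp [this]
  have hterm : (if 2 * Zc 0 v = m then 1 else 0) = 1 := by rw [hzv, if_pos (by omega)]
  calc 0 < 1 := one_pos
  _ ≤ Em m := by
      rw [← hterm, Em]
      exact Finset.single_le_sum (f := fun v : Fin m → Fin 2 => if 2 * Zc 0 v = m then 1 else 0)
        (fun i _ => by positivity) (Finset.mem_univ v)

lemma Vk_succ {n k : ℕ} (h : k < n) :
    Vk n k = Vk n (k + 1) + 2 ^ (k + 1) * Em (n - k - 1) := by
  have hnk : n - k = (n - k - 1) + 1 := by omega
  have hbc : 2 ^ (k + 1) * 2 ^ (n - k - 1) = 2 ^ n := by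
    rw [← pow_add]; congr 1; omega
  rw [Vk, hnk, Tm_succ, Vk, show n - (k + 1) = n - k - 1 from by omega]
  calc k * 2 ^ n + 2 ^ (k + 1) * (2 * Tm (n - k - 1) + 2 ^ (n - k - 1) + Em (n - k - 1))
      = k * 2 ^ n + (2 ^ (k + 1) * 2) * Tm (n - k - 1) + 2 ^ (k + 1) * 2 ^ (n - k - 1)
        + 2 ^ (k + 1) * Em (n - k - 1) := by ring
    _ = (k + 1) * 2 ^ n + 2 ^ (k + 1 + 1) * Tm (n - k - 1) + 2 ^ (k + 1) * Em (n - k - 1) := by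
        rw [hbc, ← pow_succ]; ring

lemma Vk_succ_le {n k : ℕ} (h : k < n) : Vk n (k + 1) ≤ Vk n k := by
  rw [Vk_succ h]; exact Nat.le_add_right _ _

lemma Vk_le_two {n : ℕ} : ∀ k, 2 ≤ k → k ≤ n → Vk n k ≤ Vk n 2 := by
  intro k
  induction k with
  | zero => omega
  | succ k ih =>
    intro h2 hle
    rcases Nat.lt_or_ge k 2 with hk | hk
    · have : k = 1 := by omega
      subst this; exact le_refl _
    · exact (Vk_succ_le (by omega)).trans (ih hk (by omega))

lemma Vk_zero_eq_one {n : ℕ} (hn : 2 < n) (hne : Even n) : Vk n 0 = Vk n 1 := by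
  rw [Vk_succ (by omega), Em_odd (by simp [Nat.even_sub (by omega : 1 ≤ n), hne]), mul_zero,
    add_zero]

lemma Vk_two_lt_one {n : ℕ} (hn : 2 < n) (hne : Even n) : Vk n 2 < Vk n 1 := by
  have h := Vk_succ (n := n) (k := 1) (by omega)
  norm_num at h
  have hpos : 0 < 2 ^ (1 + 1) * Em (n - 1 - 1) := by
    have : Even (n - 1 - 1) := by
      rw [Nat.even_sub (by omega), Nat.even_sub (by omega)]
      simp [hne]
    have := Em_pos this
    positivity
  omega

lemma Vk_le_one {n : ℕ} (hn : 2 < n) (hne : Even n) : ∀ k ≤ n, Vk n k ≤ Vk n 1 := by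
  intro k hk
  rcases Nat.lt_or_ge k 2 with h | h
  · interval_cases k
    · exact (Vk_zero_eq_one hn hne).le
    · exact le_refl _
  · exact (Vk_le_two k h hk).trans (Vk_two_lt_one hn hne).le

lemma maxSim_two (n : ℕ) (g : Fin 2 → Fin n → Fin 2) (x : Fin n → Fin 2) :
    maxSim n 2 g x = max (Sim n 2 (g 0) x) (Sim n 2 (g 1) x) := by
  rw [maxSim, show (univ : Finset (Fin 2)) = {0, 1} from rfl]
  simp

lemma Sim_eq_sum (n : ℕ) (z x : Fin n → Fin 2) :
    Sim n 2 z x = ∑ j, if z j = x j then 1 else 0 := Finset.card_filter _ _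

lemma key_decomp (n : ℕ) (g : Fin 2 → Fin n → Fin 2) :
    2 * ∑ x : Fin n → Fin 2, maxSim n 2 g x =
      Vk n ((univ.filter fun j => g 0 j = g 1 j).card) := by
  classical
  let p : Fin n → Prop := fun j => g 0 j = g 1 j
  let k := (univ.filter p).card
  show 2 * ∑ x : Fin n → Fin 2, maxSim n 2 g x = Vk n k
  have hkn : k ≤ n := by
    simpa using (Finset.card_filter_le univ p)
  have hcP : Fintype.card {j // p j} = k := Fintype.card_subtype _
  have hcQ : Fintype.card {j // ¬ p j} = n - k := by
    rw [Fintype.card_subtype]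
    have h2 := Finset.card_filter_add_card_filter_not (s := (univ : Finset (Fin n)))
      (p := p)
    simp only [Finset.card_univ, Fintype.card_fin] at h2
    omega
  let cP : {j // p j} → Fin 2 := fun j => g 0 j.1
  let cQ : {j // ¬ p j} → Fin 2 := fun j => g 0 j.1
  let A : (Fin n → Fin 2) → ℕ := fun x => ∑ j : {j // p j}, if g 0 j.1 = x j.1 then 1 else 0
  let B : (Fin n → Fin 2) → ℕ := fun x => ∑ j : {j // ¬ p j}, if g 0 j.1 = x j.1 then 1 else 0
  have hsplit : ∀ x, maxSim n 2 g x = A x + max (B x) ((n - k) - B x) := by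
    intro x
    have hS0 : Sim n 2 (g 0) x = A x + B x := by
      rw [Sim_eq_sum, ← Finset.sum_filter_add_sum_filter_not univ p]
      congr 1
      · exact Finset.sum_subtype _ (fun j => by simp) _
      · exact Finset.sum_subtype _ (fun j => by simp) _
    have hB' : (∑ j : {j // ¬ p j}, if g 1 j.1 = x j.1 then 1 else 0) = (n - k) - B x := by
      have hone : ∀ j : {j // ¬ p j},
          ((if g 1 j.1 = x j.1 then 1 else 0) + (if g 0 j.1 = x j.1 then 1 else 0) : ℕ) = 1 := by
        intro j
        have hne : ¬ g 0 j.1 = g 1 j.1 := j.2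
        revert hne
        generalize g 0 j.1 = a; generalize g 1 j.1 = b; generalize x j.1 = w
        revert a b w; decide
      have hsum : (∑ j : {j // ¬ p j}, if g 1 j.1 = x j.1 then 1 else 0) + B x = n - k := by
        simp only [B]
        rw [← Finset.sum_add_distrib, Fintype.sum_congr _ _ hone]
        simp [hcQ]
      omega
    have hS1 : Sim n 2 (g 1) x = A x + ((n - k) - B x) := by
      rw [Sim_eq_sum, ← Finset.sum_filter_add_sum_filter_not univ p]
      congr 1
      · rw [Finset.sum_subtype _ (fun j => by simp : ∀ j, j ∈ univ.filter p ↔ p j)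
          (fun j => if g 1 j = x j then 1 else 0)]
        exact Fintype.sum_congr _ _ fun j => by rw [show g 1 j.1 = g 0 j.1 from j.2.symm]
      · rw [Finset.sum_subtype _ (fun j => by simp : ∀ j, j ∈ univ.filter (fun j => ¬ p j) ↔ ¬ p j)
          (fun j => if g 1 j = x j then 1 else 0)]
        exact hB'
    rw [maxSim_two, hS0, hS1, max_add_add_left]
  let E := Equiv.piEquivPiSubtypeProd p (fun _ => Fin 2)
  have hA : ∀ uv : ({j // p j} → Fin 2) × ({j // ¬ p j} → Fin 2),
      A (E.symm uv) = Zc cP uv.1 := by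
    rintro ⟨u, v⟩
    refine Fintype.sum_congr _ _ fun j => ?_
    rw [show (E.symm (u, v)) j.1 = u j from by
      rw [Equiv.piEquivPiSubtypeProd_symm_apply, dif_pos j.2]]
  have hB : ∀ uv : ({j // p j} → Fin 2) × ({j // ¬ p j} → Fin 2),
      B (E.symm uv) = Zc cQ uv.2 := by
    rintro ⟨u, v⟩
    refine Fintype.sum_congr _ _ fun j => ?_
    rw [show (E.symm (u, v)) j.1 = v j from by
      rw [Equiv.piEquivPiSubtypeProd_symm_apply, dif_neg j.2]]
  have hsum1 : ∑ x : Fin n → Fin 2, maxSim n 2 g x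
      = 2 ^ (n - k) * (∑ u : {j // p j} → Fin 2, Zc cP u)
        + 2 ^ k * (∑ v : {j // ¬ p j} → Fin 2, max (Zc cQ v) ((n - k) - Zc cQ v)) := by
    rw [← Equiv.sum_comp E.symm (fun x => maxSim n 2 g x), Fintype.sum_prod_type]
    calc ∑ u, ∑ v, maxSim n 2 g (E.symm (u, v))
        = ∑ u : {j // p j} → Fin 2, ∑ v : {j // ¬ p j} → Fin 2,
            (Zc cP u + max (Zc cQ v) ((n - k) - Zc cQ v)) := by
          refine Fintype.sum_congr _ _ fun u => Fintype.sum_congr _ _ fun v => ?_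
          rw [hsplit, hA ⟨u, v⟩, hB ⟨u, v⟩]
      _ = _ := by
          simp only [Finset.sum_add_distrib, Finset.sum_const, Finset.card_univ,
            Fintype.card_fun, hcP, hcQ, Fintype.card_fin, smul_eq_mul, ← Finset.sum_mul,
            ← Finset.mul_sum]
  have h2 : 2 * (∑ u : {j // p j} → Fin 2, Zc cP u) = k * 2 ^ k := by
    rw [two_mul_sum_Zc, hcP]
  have h3 : (∑ v : {j // ¬ p j} → Fin 2, max (Zc cQ v) ((n - k) - Zc cQ v)) = Tm (n - k) := by
    rw [← hcQ]
    exact Tsum_eq cQ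
  rw [hsum1, h3, Nat.mul_add, ← Nat.mul_assoc, ← Nat.mul_assoc, Nat.mul_comm 2 (2 ^ (n - k)),
    Nat.mul_assoc (2 ^ (n - k)) 2, h2, Vk]
  have hpow : 2 ^ (n - k) * 2 ^ k = 2 ^ n := by rw [← pow_add]; congr 1; omega
  calc 2 ^ (n - k) * (k * 2 ^ k) + 2 * 2 ^ k * Tm (n - k)
      = k * (2 ^ (n - k) * 2 ^ k) + 2 ^ (k + 1) * Tm (n - k) := by rw [pow_succ]; ring
    _ = k * 2 ^ n + 2 ^ (k + 1) * Tm (n - k) := by rw [hpow]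

lemma noninj_iff {n : ℕ} (g : Fin 2 → Fin n → Fin 2) (j : Fin n) :
    ¬ Function.Injective (fun y => g y j) ↔ g 0 j = g 1 j := by
  constructor
  · intro h
    by_contra hne
    apply h
    intro a b hab
    fin_cases a <;> fin_cases b <;> simp_all
  · intro heq hinj
    have : (0 : Fin 2) = 1 := hinj heq
    simp at this

lemma bad_card_le_one {n : ℕ} (g : Fin 2 → Fin n → Fin 2) (hg : Property2 n 2 g) :
    ((univ.filter fun j => g 0 j = g 1 j).card : ℕ) ≤ 1 := by
  rw [Finset.card_le_one]
  intro a ha b hb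
  rw [Finset.mem_filter] at ha hb
  exact hg a b ((noninj_iff g a).mpr ha.2) ((noninj_iff g b).mpr hb.2)

lemma bad_card_ge_two {n : ℕ} (f : Fin 2 → Fin n → Fin 2) (hf : ¬ Property2 n 2 f) :
    2 ≤ ((univ.filter fun j => f 0 j = f 1 j).card : ℕ) := by
  rw [Property2] at hf
  push_neg at hf
  obtain ⟨j₁, j₂, h1, h2, hne⟩ := hf
  exact Finset.one_lt_card.mpr
    ⟨j₁, Finset.mem_filter.mpr ⟨Finset.mem_univ _, (noninj_iff f j₁).mp h1⟩,
     j₂, Finset.mem_filter.mpr ⟨Finset.mem_univ _, (noninj_iff f j₂).mp h2⟩, hne⟩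

/-- Lemma 5: for `d = 2` and even `n > 2`, every strategy with
Property 2 is optimal and strictly better than every strategy without
Property 2. -/
theorem stmt_8 (n : ℕ) (hn : 2 < n) (hne : Even n) :
    (∀ g : Fin 2 → Fin n → Fin 2, Property2 n 2 g → IsOptimal n 2 g) ∧
    (∀ f g : Fin 2 → Fin n → Fin 2, ¬ Property2 n 2 f → Property2 n 2 g →
      Value n 2 f < Value n 2 g) := by
  have hden : (0 : ℚ) < (n : ℚ) * (2 : ℚ) ^ n := by
    have h1 : (0 : ℚ) < (n : ℚ) := by exact_mod_cast (by omega : 0 < n)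
    positivity
  have hval : ∀ g : Fin 2 → Fin n → Fin 2,
      Value n 2 g = ((∑ x : Fin n → Fin 2, maxSim n 2 g x : ℕ) : ℚ) / ((n : ℚ) * 2 ^ n) := by
    intro g
    rw [Value]
    push_cast
    ring
  have hbadle : ∀ g : Fin 2 → Fin n → Fin 2,
      ((univ.filter fun j => g 0 j = g 1 j).card : ℕ) ≤ n := by
    intro g
    simpa using Finset.card_filter_le univ (fun j => g 0 j = g 1 j)
  have hgood : ∀ g : Fin 2 → Fin n → Fin 2, Property2 n 2 g →
      2 * ∑ x : Fin n → Fin 2, maxSim n 2 g x = Vk n 1 := by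
    intro g hg
    rw [key_decomp]
    have h1 := bad_card_le_one g hg
    interval_cases h : ((univ.filter fun j => g 0 j = g 1 j).card : ℕ)
    · exact Vk_zero_eq_one hn hne
    · rfl
  constructor
  · intro g hg f
    rw [hval, hval, div_le_div_iff_of_pos_right hden, Nat.cast_le]
    have hf2 := key_decomp n f
    have hg2 := hgood g hg
    have hle : Vk n ((univ.filter fun j => f 0 j = f 1 j).card) ≤ Vk n 1 :=
      Vk_le_one hn hne _ (hbadle f)
    omega
  · intro f g hf hg
    rw [hval, hval, div_lt_div_iff_of_pos_right hden, Nat.cast_lt]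
    have hf2 := key_decomp n f
    have hg2 := hgood g hg
    have hlt : Vk n ((univ.filter fun j => f 0 j = f 1 j).card) < Vk n 1 :=
      lt_of_le_of_lt (Vk_le_two _ (bad_card_ge_two f hf) (hbadle f)) (Vk_two_lt_one hn hne)
    omega
end

section
/- Let n = 2 and d ≥ 2, and let g be a strategy satisfying Property 2. Then exactly d words x : Fin 2 → Fin d satisfy max over y of Sim(g y, x) = 2, and the remaining d² − d words satisfy max over y of Sim(g y, x) = 1. -/
open Finset

/-- for `n = 2`, a strategy with Property 2 approximates exactly
`d` words perfectly (similarity 2) and the remaining `d² - d` words with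
similarity 1. -/
theorem stmt_9 (d : ℕ) (hd : 2 ≤ d)
    (g : Fin d → Fin 2 → Fin d) (hp : Property2 2 d g) :
    (Finset.univ.filter fun x : Fin 2 → Fin d => maxSim 2 d g x = 2).card = d ∧
    (Finset.univ.filter fun x : Fin 2 → Fin d => maxSim 2 d g x = 1).card
      = d ^ 2 - d := by
  have hd0 : 0 < d := by omega
  haveI : Nonempty (Fin d) := ⟨⟨0, hd0⟩⟩
  obtain ⟨j, hj⟩ : ∃ j : Fin 2, Function.Injective fun y => g y j := by
    by_contra h
    push_neg at h
    have := hp 0 1 (h 0) (h 1)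
    simp at this
  have hsurj : Function.Surjective fun y => g y j :=
    Finite.surjective_of_injective hj
  have hSimle : ∀ z x : Fin 2 → Fin d, Sim 2 d z x ≤ 2 := by
    intro z x
    have := Finset.card_filter_le (Finset.univ : Finset (Fin 2)) (fun i => z i = x i)
    simpa [Sim] using this
  have hmaxle : ∀ x, maxSim 2 d g x ≤ 2 := fun x =>
    Finset.sup_le fun y _ => hSimle _ _
  have hmaxge : ∀ x, 1 ≤ maxSim 2 d g x := by
    intro x
    obtain ⟨y, hy⟩ := hsurj (x j)
    have h1 : 1 ≤ Sim 2 d (g y) x := by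
      rw [Sim, Finset.one_le_card]
      exact ⟨j, by simpa using hy⟩
    rw [maxSim]
    refine le_trans h1 ?_
    have := Finset.le_sup (f := fun y' => Sim 2 d (g y') x) (Finset.mem_univ y)
    simpa using this
  have hSim2 : ∀ y x, Sim 2 d (g y) x = 2 ↔ g y = x := by
    intro y x
    constructor
    · intro h
      rw [Sim] at h
      have huniv : (Finset.univ.filter fun i => g y i = x i) = Finset.univ :=
        Finset.eq_univ_of_card _ (by simpa using h)
      funext i
      have := Finset.eq_univ_iff_forall.mp huniv i
      simpa using this
    · intro h
      subst h
      simp [Sim]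
  have hmax2 : ∀ x, maxSim 2 d g x = 2 ↔ ∃ y, g y = x := by
    intro x
    constructor
    · intro h
      obtain ⟨y, -, hy⟩ := Finset.exists_mem_eq_sup Finset.univ Finset.univ_nonempty
        (fun y => Sim 2 d (g y) x)
      refine ⟨y, (hSim2 y x).mp ?_⟩
      rw [maxSim] at h
      omega
    · rintro ⟨y, rfl⟩
      have h2 : Sim 2 d (g y) (g y) = 2 := (hSim2 y (g y)).mpr rfl
      refine le_antisymm (hmaxle _) ?_
      rw [maxSim]
      have := Finset.le_sup (f := fun y' => Sim 2 d (g y') (g y)) (Finset.mem_univ y)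
      simpa [h2] using this
  have hginj : Function.Injective g := fun a b hab => hj (congrFun hab j)
  have hset2 : (Finset.univ.filter fun x : Fin 2 → Fin d => maxSim 2 d g x = 2)
      = Finset.univ.image g := by
    ext x
    simp [hmax2]
  have hcard2 : (Finset.univ.filter fun x : Fin 2 → Fin d => maxSim 2 d g x = 2).card = d := by
    rw [hset2, Finset.card_image_of_injective _ hginj]
    simp
  refine ⟨hcard2, ?_⟩
  have hset1 : (Finset.univ.filter fun x : Fin 2 → Fin d => maxSim 2 d g x = 1)
      = Finset.univ \ (Finset.univ.filter fun x : Fin 2 → Fin d => maxSim 2 d g x = 2) := by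
    ext x
    simp only [Finset.mem_filter, Finset.mem_sdiff, Finset.mem_univ, true_and]
    have h1 := hmaxge x
    have h2 := hmaxle x
    omega
  rw [hset1, Finset.card_sdiff_of_subset (Finset.filter_subset _ _), hcard2]
  congr 1
  simp [Finset.card_univ]
end

section
/- Let n = 2 and d ≥ 2, and let g be a strategy satisfying Property 2. Then Value(g) = (d + (d−1)·d/2) / d², i.e., Value(g) = (d + 1) / (2d). -/
open Finset

/-- for `n = 2`, any strategy with Property 2 has value
`(d + (d-1)d/2)/d² = (d+1)/(2d)`. -/
theorem stmt_10 (d : ℕ) (hd : 2 ≤ d)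
    (g : Fin d → Fin 2 → Fin d) (hp : Property2 2 d g) :
    Value 2 d g = ((d : ℚ) + 1) / (2 * d) := by
  have hd0 : (d : ℚ) ≠ 0 := by
    have : 0 < d := lt_of_lt_of_le (by norm_num) hd
    exact_mod_cast this.ne'
  obtain ⟨j, hj⟩ : ∃ j : Fin 2, Function.Injective fun y => g y j := by
    by_cases h0 : Function.Injective fun y => g y (0 : Fin 2)
    · exact ⟨0, h0⟩
    · by_cases h1 : Function.Injective fun y => g y (1 : Fin 2)
      · exact ⟨1, h1⟩
      · exact absurd (hp 0 1 h0 h1) (by decide)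
  have hsurj : Function.Surjective fun y => g y j :=
    Finite.injective_iff_surjective.mp hj
  have hginj : Function.Injective g := fun a b h => hj (congrFun h j)
  have hmax : ∀ x : Fin 2 → Fin d,
      maxSim 2 d g x = if x ∈ Finset.image g Finset.univ then 2 else 1 := by
    intro x
    unfold maxSim
    by_cases hx : x ∈ Finset.image g Finset.univ
    · simp only [hx, if_true]
      obtain ⟨y, -, hy⟩ := Finset.mem_image.mp hx
      apply le_antisymm
      · apply Finset.sup_le
        intro y' _
        calc Sim 2 d (g y') x ≤ (Finset.univ : Finset (Fin 2)).card :=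
              Finset.card_filter_le _ _
          _ = 2 := by simp
      · calc (2 : ℕ) = Sim 2 d (g y) x := by
              unfold Sim
              rw [Finset.filter_true_of_mem (fun j' _ => by rw [hy])]
              simp
          _ ≤ _ := Finset.le_sup (f := fun y => Sim 2 d (g y) x) (Finset.mem_univ y)
    · simp only [hx, if_false]
      apply le_antisymm
      · apply Finset.sup_le
        intro y _
        by_contra hle
        push_neg at hle
        have h2 : (Finset.univ : Finset (Fin 2)).card ≤
            (Finset.univ.filter fun j' => g y j' = x j').card := by
          simp [Sim] at hle ⊢; omega
        have heq : (Finset.univ.filter fun j' => g y j' = x j') = Finset.univ :=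
          Finset.eq_of_subset_of_card_le (Finset.subset_univ _) h2
        have hall := Finset.eq_univ_iff_forall.mp heq
        have : g y = x := funext fun j' =>
          (Finset.mem_filter.mp (hall j')).2
        exact hx (Finset.mem_image.mpr ⟨y, Finset.mem_univ y, this⟩)
      · obtain ⟨y, hy⟩ := hsurj (x j)
        have h1 : 1 ≤ Sim 2 d (g y) x :=
          Finset.card_pos.mpr ⟨j, Finset.mem_filter.mpr ⟨Finset.mem_univ j, hy⟩⟩
        exact le_trans h1
          (Finset.le_sup (f := fun y => Sim 2 d (g y) x) (Finset.mem_univ y))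
  have hsum : ∑ x : Fin 2 → Fin d, (maxSim 2 d g x : ℚ) = d ^ 2 + d := by
    have hcongr : ∀ x ∈ (Finset.univ : Finset (Fin 2 → Fin d)),
        (maxSim 2 d g x : ℚ) =
          1 + (if x ∈ Finset.image g Finset.univ then 1 else 0) := by
      intro x _
      rw [hmax]
      split <;> norm_num
    rw [Finset.sum_congr rfl hcongr, Finset.sum_add_distrib, Finset.sum_boole]
    have hcard1 : (Finset.univ : Finset (Fin 2 → Fin d)).card = d ^ 2 := by
      simp [Finset.card_univ]
    have hfilt : Finset.univ.filter (· ∈ Finset.image g Finset.univ) =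
        Finset.image g Finset.univ := by
      ext z; simp
    have hcard2 : (Finset.image g Finset.univ).card = d := by
      rw [Finset.card_image_of_injective _ hginj]
      simp
    rw [Finset.sum_const, hcard1, hfilt, hcard2]
    ring
  unfold Value
  rw [hsum]
  have h2d : (2 : ℚ) * d ^ 2 ≠ 0 := by positivity
  field_simp
  ring
end

section
/- Let d = 2 and n ≥ 1. Then the majority strategy g_maj (over the binary alphabet Fin 2) has value Value(g_maj) = 2^{-n} · Σ_{k=0}^{n} binom(n, k) · max(k, n − k) / n. -/
open Finset

lemma fin2_cases (a : Fin 2) : a = 0 ∨ a = 1 := by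
  match a with
  | 0 => exact Or.inl rfl
  | 1 => exact Or.inr rfl

noncomputable def myEquiv (n : ℕ) : (Fin n → Fin 2) ≃ Finset (Fin n) where
  toFun x := Finset.univ.filter fun j => x j = 0
  invFun s := fun j => if j ∈ s then 0 else 1
  left_inv x := by
    funext j
    rcases fin2_cases (x j) with h | h <;> simp [h]
  right_inv s := by
    ext j
    simp only [mem_filter, mem_univ, true_and]
    by_cases h : j ∈ s <;> simp [h]

lemma sum_by_count {M : Type*} [AddCommMonoid M] (n : ℕ) (F : ℕ → M) :
    ∑ x : Fin n → Fin 2, F (Finset.univ.filter fun j => x j = 0).card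
      = ∑ k ∈ Finset.range (n + 1), (n.choose k) • F k := by
  refine (Fintype.sum_equiv (myEquiv n) _ (fun s => F s.card) (fun x => rfl)).trans ?_
  have : (Finset.univ : Finset (Finset (Fin n)))
      = (Finset.range (n+1)).biUnion fun k => Finset.powersetCard k Finset.univ := by
    rw [← Finset.powerset_univ, Finset.powerset_card_biUnion]
    simp
  rw [this, Finset.sum_biUnion]
  · refine Finset.sum_congr rfl fun k _ => ?_
    rw [Finset.sum_congr rfl (fun s hs => ?_), Finset.sum_const, Finset.card_powersetCard,
      Finset.card_univ, Fintype.card_fin]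
    rw [(Finset.mem_powersetCard.mp hs).2]
  · intro a ha b hb hab
    exact Finset.pairwise_disjoint_powersetCard _ hab

lemma maxSim_maj (n : ℕ) (x : Fin n → Fin 2) :
    maxSim n 2 (fun y _ => y) x
      = max (Finset.univ.filter fun j => x j = 0).card
            (n - (Finset.univ.filter fun j => x j = 0).card) := by
  have huniv : (Finset.univ : Finset (Fin 2)) = {0, 1} := by decide
  have h0 : Sim n 2 (fun _ => (0 : Fin 2)) x = (Finset.univ.filter fun j => x j = 0).card := by
    unfold Sim; congr 1; ext j; simp [eq_comm]
  have h1 : Sim n 2 (fun _ => (1 : Fin 2)) x = n - (Finset.univ.filter fun j => x j = 0).card := by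
    unfold Sim
    have hsplit := Finset.card_filter_add_card_filter_not
      (s := (Finset.univ : Finset (Fin n))) (p := fun j => x j = 0)
    have : (Finset.univ.filter fun j => (1 : Fin 2) = x j)
        = Finset.univ.filter fun j => ¬ (x j = 0) := by
      ext j
      rcases fin2_cases (x j) with h | h <;> simp [h]
    rw [this]
    simp only [Finset.card_univ, Fintype.card_fin] at hsplit
    omega
  unfold maxSim
  rw [huniv]
  rw [Finset.sup_insert, Finset.sup_singleton]
  simp [h0, h1]

/-- for the binary alphabet `d = 2`, the value of the majority
strategy equals `2^{-n} · Σ_{k=0}^{n} C(n,k) · max(k, n-k) / n`. -/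
theorem stmt_11 (n : ℕ) (hn : 1 ≤ n) :
    Value n 2 (fun y _ => y) =
      (2 : ℚ) ^ (-(n : ℤ)) *
        ∑ k ∈ Finset.range (n + 1),
          (n.choose k : ℚ) * ((max k (n - k) : ℕ) : ℚ) / (n : ℚ) := by
  have key : (∑ x : Fin n → Fin 2, (maxSim n 2 (fun y _ => y) x : ℚ))
      = ∑ k ∈ Finset.range (n + 1), (n.choose k : ℚ) * ((max k (n - k) : ℕ) : ℚ) := by
    simp only [maxSim_maj]
    rw [sum_by_count (M := ℚ) n (fun k => ((max k (n - k) : ℕ) : ℚ))]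
    simp [nsmul_eq_mul]
  rw [Value, key]
  have hn' : (n : ℚ) ≠ 0 := by positivity
  have h2 : ((2:ℚ) ^ n) ≠ 0 := by positivity
  rw [zpow_neg, zpow_natCast, Finset.mul_sum, Finset.sum_div]
  refine Finset.sum_congr rfl fun k _ => ?_
  field_simp
  ring
end

section
/- Let d = 2 and let n ≥ 2 be even, and let g be a strategy (over the binary alphabet Fin 2) satisfying Property 1. Then for each k with 0 ≤ k < n/2, the number of words x : Fin n → Fin 2 with max over y of Sim(g y, x) = n − k is exactly 2·binom(n, k), and the number of words x with max over y of Sim(g y, x) = n/2 is exactly binom(n, n/2). -/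
open Finset

lemma countSim (n k : ℕ) (z : Fin n → Fin 2) :
    (Finset.univ.filter fun x : Fin n → Fin 2 => Sim n 2 z x = k).card = n.choose k := by
  have h2 : ∀ a b c : Fin 2, ((a = b) ↔ (a = c)) → b = c := by decide
  have h3 : ∀ a : Fin 2, a ≠ a + 1 := by decide
  have := Finset.card_bij (s := Finset.univ.filter fun x : Fin n → Fin 2 => Sim n 2 z x = k)
    (t := Finset.powersetCard k (Finset.univ : Finset (Fin n)))
    (fun x _ => Finset.univ.filter fun j => z j = x j)
    (by
      intro x hx
      simp only [Finset.mem_filter, Finset.mem_univ, true_and] at hx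
      simp [Finset.mem_powersetCard]
      exact hx)
    (by
      intro x hx x' hx' h
      funext j
      have hj : (z j = x j) ↔ (z j = x' j) := by
        have := Finset.ext_iff.mp h j
        simpa using this
      exact h2 _ _ _ hj)
    (by
      intro s hs
      simp only [Finset.mem_powersetCard] at hs
      refine ⟨fun j => if j ∈ s then z j else z j + 1, ?_, ?_⟩
      · simp only [Finset.mem_filter, Finset.mem_univ, true_and]
        have : (Finset.univ.filter fun j => z j = if j ∈ s then z j else z j + 1) = s := by
          ext j
          by_cases hj : j ∈ s <;> simp [hj, h3 (z j)]
        rw [Sim, this, hs.2]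
      · ext j
        by_cases hj : j ∈ s <;> simp [hj, h3 (z j)])
  rw [this, Finset.card_powersetCard, Finset.card_univ, Fintype.card_fin]

lemma sim_compl (n : ℕ) (z w : Fin n → Fin 2) (h : ∀ j, z j ≠ w j) (x : Fin n → Fin 2) :
    Sim n 2 w x = n - Sim n 2 z x := by
  have h2 : ∀ a b c : Fin 2, a ≠ b → (b = c ↔ ¬ a = c) := by decide
  have : (Finset.univ.filter fun j => w j = x j)
      = (Finset.univ.filter fun j => ¬ z j = x j) := by
    ext j; simp [h2 _ _ _ (h j)]
  rw [Sim, this, Finset.filter_not, Finset.card_sdiff_of_subset (Finset.filter_subset _ _),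
    Finset.card_univ, Fintype.card_fin, Sim]

lemma sim_le (n : ℕ) (z x : Fin n → Fin 2) : Sim n 2 z x ≤ n := by
  exact (Finset.card_filter_le _ _).trans (by simp)

/-- for `d = 2` and even `n ≥ 2`, a strategy with Property 1
`(n-k)`-approximates exactly `2·C(n,k)` words for each `0 ≤ k < n/2`, and
`(n/2)`-approximates exactly `C(n, n/2)` words. -/
theorem stmt_12 (n : ℕ) (hn : 2 ≤ n) (hne : Even n)
    (g : Fin 2 → Fin n → Fin 2) (hp : Property1 n 2 g) :
    (∀ k : ℕ, k < n / 2 →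
      (Finset.univ.filter fun x : Fin n → Fin 2 => maxSim n 2 g x = n - k).card
        = 2 * n.choose k) ∧
    (Finset.univ.filter fun x : Fin n → Fin 2 => maxSim n 2 g x = n / 2).card
      = n.choose (n / 2) := by
  obtain ⟨m, hm⟩ := hne
  have hm2 : n / 2 = m := by omega
  have hg : ∀ j, g 0 j ≠ g 1 j := by
    intro j h
    have := hp j h
    exact absurd this (by decide)
  have hc : ∀ x, Sim n 2 (g 1) x = n - Sim n 2 (g 0) x := sim_compl n (g 0) (g 1) hg
  have hmax : ∀ x, maxSim n 2 g x = max (Sim n 2 (g 0) x) (n - Sim n 2 (g 0) x) := by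
    intro x; rw [maxSim_two, hc]
  constructor
  · intro k hk
    rw [hm2] at hk
    have hfe : (Finset.univ.filter fun x : Fin n → Fin 2 => maxSim n 2 g x = n - k)
        = (Finset.univ.filter fun x : Fin n → Fin 2 => Sim n 2 (g 0) x = k)
          ∪ (Finset.univ.filter fun x : Fin n → Fin 2 => Sim n 2 (g 0) x = n - k) := by
      rw [← Finset.filter_or]
      apply Finset.filter_congr
      intro x _
      rw [hmax]
      have hs := sim_le n (g 0) x
      rcases Nat.le_total (Sim n 2 (g 0) x) (n - Sim n 2 (g 0) x) with h' | h'
      · rw [max_eq_right h'] <;> omega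
      · rw [max_eq_left h'] <;> omega
    have hdisj : Disjoint (Finset.univ.filter fun x : Fin n → Fin 2 => Sim n 2 (g 0) x = k)
        (Finset.univ.filter fun x : Fin n → Fin 2 => Sim n 2 (g 0) x = n - k) := by
      rw [Finset.disjoint_left]
      intro x hx hx'
      simp only [Finset.mem_filter] at hx hx'
      omega
    rw [hfe, Finset.card_union_of_disjoint hdisj, countSim, countSim,
      Nat.choose_symm (by omega : k ≤ n)]
    ring
  · have hfe : (Finset.univ.filter fun x : Fin n → Fin 2 => maxSim n 2 g x = n / 2)
        = (Finset.univ.filter fun x : Fin n → Fin 2 => Sim n 2 (g 0) x = n / 2) := by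
      apply Finset.filter_congr
      intro x _
      rw [hmax]
      have hs := sim_le n (g 0) x
      rcases Nat.le_total (Sim n 2 (g 0) x) (n - Sim n 2 (g 0) x) with h' | h'
      · rw [max_eq_right h'] <;> omega
      · rw [max_eq_left h'] <;> omega
    rw [hfe, countSim]
end

section
/- Let n = 2 and d ≥ 2, and let f be a strategy that does not satisfy Property 2 (i.e., both maps y ↦ f y 0 and y ↦ f y 1 fail to be injective, equivalently neither column of f is surjective onto Fin d). Then there exists a word x : Fin 2 → Fin d such that Sim(f y, x) = 0 for every y : Fin d. -/
open Finset

/-- for `n = 2`, if a strategy fails Property 2 (both columns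
fail to be injective), then some word has similarity 0 with every row. -/
theorem stmt_13 (d : ℕ) (hd : 2 ≤ d)
    (f : Fin d → Fin 2 → Fin d) (hp : ¬ Property2 2 d f) :
    ∃ x : Fin 2 → Fin d, ∀ y : Fin d, Sim 2 d (f y) x = 0 := by
  unfold Property2 at hp
  push_neg at hp
  obtain ⟨j₁, j₂, h₁, h₂, hne⟩ := hp
  have key : ∀ j : Fin 2, ¬ Function.Injective (fun y => f y j) →
      ∃ a : Fin d, ∀ y : Fin d, f y j ≠ a := by
    intro j hj
    by_contra hc
    push_neg at hc
    exact hj (Finite.injective_iff_surjective.mpr hc)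
  have hall : ∀ j : Fin 2, ¬ Function.Injective (fun y => f y j) := by
    intro j
    fin_cases j <;> fin_cases j₁ <;> fin_cases j₂ <;> simp_all
  obtain ⟨a₀, ha₀⟩ := key 0 (hall 0)
  obtain ⟨a₁, ha₁⟩ := key 1 (hall 1)
  refine ⟨![a₀, a₁], fun y => ?_⟩
  rw [Sim, Finset.card_eq_zero, Finset.filter_eq_empty_iff]
  intro j _
  fin_cases j <;> simp [ha₀ y, ha₁ y]
end

section
/- Let d = 2 and let n > 2 be even, and let f be a strategy (over the binary alphabet Fin 2) that does not satisfy Property 2, i.e., there exist two distinct indices j₁ ≠ j₂ at which the maps y ↦ f y j₁ and y ↦ f y j₂ fail to be injective. Then there exists a word x : Fin n → Fin 2 such that max over y of Sim(f y, x) < n/2, i.e., max over y of Sim(f y, x) ≤ n/2 − 1. -/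
open Finset

/-- for `d = 2` and even `n > 2`, if a strategy fails Property 2,
then some word is approximated with similarity strictly below `n/2`. -/
theorem stmt_14 (n : ℕ) (hn : 2 < n) (hne : Even n)
    (f : Fin 2 → Fin n → Fin 2) (hp : ¬ Property2 n 2 f) :
    ∃ x : Fin n → Fin 2, maxSim n 2 f x < n / 2 := by
  classical
  simp only [Property2, not_forall] at hp
  obtain ⟨j₁, j₂, h1, h2, hj⟩ := hp
  -- non-injective columns over Fin 2 mean the two rows agree there
  have key : ∀ j : Fin n, ¬ Function.Injective (fun y : Fin 2 => f y j) →
      f 0 j = f 1 j := by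
    intro j hj'
    rw [Function.not_injective_iff] at hj'
    obtain ⟨a, b, hab, hne'⟩ := hj'
    fin_cases a <;> fin_cases b <;> simp_all
  have e1 : f 0 j₁ = f 1 j₁ := key j₁ h1
  have e2 : f 0 j₂ = f 1 j₂ := key j₂ h2
  set D : Finset (Fin n) := Finset.univ.filter fun j => f 0 j ≠ f 1 j with hD
  have hDsub : D ⊆ (Finset.univ \ {j₁, j₂}) := by
    intro j hjD
    simp only [hD, mem_filter] at hjD
    simp only [mem_sdiff, mem_univ, true_and, mem_insert, mem_singleton]
    rintro (rfl | rfl) <;> exact hjD.2 (by assumption)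
  have hcardD : D.card ≤ n - 2 := by
    have := Finset.card_le_card hDsub
    rwa [Finset.card_univ_diff, Finset.card_insert_of_notMem (by simpa using hj),
      Finset.card_singleton, Fintype.card_fin] at this
  obtain ⟨S, hSsub, hScard⟩ := Finset.exists_subset_card_eq (s := D) (n := D.card / 2) (Nat.div_le_self _ _)
  -- define x
  refine ⟨fun j => if j ∈ S then f 0 j else f 0 j + 1, ?_⟩
  have flip_ne : ∀ a : Fin 2, ¬ (a = a + 1) := by decide
  have flip_iff : ∀ a b : Fin 2, (b = a + 1) ↔ ¬ (a = b) := by decide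
  have sim0 : Sim n 2 (f 0) (fun j => if j ∈ S then f 0 j else f 0 j + 1) = S.card := by
    unfold Sim
    congr 1
    ext j
    by_cases h : j ∈ S <;> simp [h, flip_ne]
  have sim1 : Sim n 2 (f 1) (fun j => if j ∈ S then f 0 j else f 0 j + 1)
      = D.card - S.card := by
    unfold Sim
    rw [← Finset.card_sdiff_of_subset hSsub]
    congr 1
    ext j
    by_cases h : j ∈ S
    · have hjD := hSsub h
      simp only [hD, mem_filter] at hjD
      simp [h, hD, Ne.symm hjD.2]
    · simp [h, hD, flip_iff (f 0 j) (f 1 j)]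
  obtain ⟨k, rfl⟩ := hne
  have hk : 2 ≤ k := by omega
  have hhalf : (k + k) / 2 = k := by omega
  rw [maxSim, hhalf]
  rw [Finset.sup_lt_iff (by simp only [Nat.bot_eq_zero]; omega : (⊥ : ℕ) < k)]
  intro y _
  fin_cases y
  · show Sim (k + k) 2 (f 0) (fun j => if j ∈ S then f 0 j else f 0 j + 1) < k
    rw [sim0, hScard]; omega
  · show Sim (k + k) 2 (f 1) (fun j => if j ∈ S then f 0 j else f 0 j + 1) < k
    rw [sim1, hScard]; omega
end
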